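/- arXiv:2108.10158 — 6 statements merged into one kernel-verified Lean document; each statement's English description precedes it below -/
import Mathlib

section
/- For all integers N ≥ 2, d with 1 ≤ d ≤ N, and l with 0 ≤ l ≤ N-1, the number AQ_N(l,d) of tuples (l_1,...,l_d) of integers with N-1 ≥ l_1 > l_2 > ... > l_d ≥ 0 and alternating sum l_1 - l_2 + l_3 - ... + (-1)^{d-1} l_d = l equals C(l-1, ⌊(d-1)/2⌋)·C(N-l, ⌊d/2⌋) when d is even, and C(l, ⌊(d-1)/2⌋)·C(N-l-1, ⌊d/2⌋) when d is odd (with the convention that C(a,b)=0 when a < b or a < 0). -/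
open Finset

/-- Binomial coefficient with integer upper argument, with the convention
that it vanishes for negative upper argument (and for `b > a`). -/
def intChoose (a : ℤ) (b : ℕ) : ℤ :=
  if a < 0 then 0 else (a.toNat.choose b : ℤ)

section AQ


section Tail
variable {d : ℕ}

private def ext0 (d : ℕ) (v : Fin d → ℤ) : ℕ → ℤ := fun j => if h : j < d then v ⟨j, h⟩ else 0

private lemma ext0_lt {k : ℕ} (w : Fin k → ℤ) {i : ℕ} (h : i < k) : ext0 k w i = w ⟨i, h⟩ :=
  dif_pos h

private def tailS (d : ℕ) (v : Fin d → ℤ) (j : ℕ) : ℤ :=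
  ∑ k ∈ Finset.Ico j d, (-1 : ℤ)^(k - j) * ext0 d v k

private lemma tailS_of_ge (v : Fin d → ℤ) {j : ℕ} (h : d ≤ j) : tailS d v j = 0 := by
  unfold tailS
  rw [Finset.Ico_eq_empty (by omega), Finset.sum_empty]

private lemma tailS_rec (v : Fin d → ℤ) {j : ℕ} (h : j < d) :
    tailS d v j = ext0 d v j - tailS d v (j+1) := by
  unfold tailS
  rw [Finset.sum_eq_sum_Ico_succ_bot h]
  have h2 : ∑ k ∈ Finset.Ico (j+1) d, (-1 : ℤ)^(k - j) * ext0 d v k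
      = -∑ k ∈ Finset.Ico (j+1) d, (-1 : ℤ)^(k-(j+1)) * ext0 d v k := by
    rw [← Finset.sum_neg_distrib]
    apply Finset.sum_congr rfl
    intro k hk
    rw [Finset.mem_Ico] at hk
    have hkj : k - j = (k - (j+1)) + 1 := by omega
    rw [hkj, pow_succ]
    ring
  rw [h2, Nat.sub_self, pow_zero, one_mul]
  ring

private lemma tailS_zero (v : Fin d → ℤ) :
    tailS d v 0 = ∑ j : Fin d, (-1 : ℤ)^(j : ℕ) * v j := by
  unfold tailS
  have h1 : ∑ j : Fin d, (-1 : ℤ)^(j : ℕ) * v j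
      = ∑ j : Fin d, (-1 : ℤ)^(j : ℕ) * ext0 d v (j : ℕ) := by
    apply Finset.sum_congr rfl
    intro j _
    simp [ext0, j.isLt]
  rw [h1, Fin.sum_univ_eq_sum_range (fun j => (-1 : ℤ)^j * ext0 d v j), Finset.range_eq_Ico]
  apply Finset.sum_congr rfl
  intro k _
  simp

-- uniqueness: downward induction
private lemma tailS_eq_of (v : Fin d → ℤ) (t : ℕ → ℤ) (h0 : ∀ j, d ≤ j → t j = 0)
    (hv : ∀ (j : ℕ) (h : j < d), v ⟨j, h⟩ = t j + t (j+1)) : ∀ j, tailS d v j = t j := by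
  have key : ∀ i j, d ≤ j + i → tailS d v j = t j := by
    intro i
    induction i with
    | zero => intro j hj; simp at hj; rw [tailS_of_ge v hj, h0 j hj]
    | succ i ih =>
      intro j hj
      by_cases h : d ≤ j + i
      · exact ih j h
      · have hjd : j < d := by omega
        rw [tailS_rec v hjd, ih (j+1) (by omega)]
        have : ext0 d v j = v ⟨j, hjd⟩ := by simp [ext0, hjd]
        rw [this, hv j hjd]
        ring
  intro j
  exact key d j (by omega)

end Tail



section CardA
variable {k n : ℕ} {a : ℤ}

private def Tuples (k n : ℕ) (a : ℤ) : Type :=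
  {w : Fin k → ℤ // StrictAnti w ∧ ∀ i, a ≤ w i ∧ w i ≤ a + n - 1}

private def tf (w : Tuples k n a) (i : Fin k) : Fin n :=
  ⟨(w.1 i.rev - a).toNat, by
    have h1 := (w.2.2 i.rev).1
    have h2 := (w.2.2 i.rev).2
    omega⟩

private lemma tf_strictMono (w : Tuples k n a) : StrictMono (tf w) := by
  intro i j hij
  have h1 : j.rev < i.rev := by rwa [Fin.rev_lt_rev]
  have h2 := w.2.1 h1
  have h3 := (w.2.2 i.rev).1
  simp only [tf, Fin.mk_lt_mk]
  omega

private def toFinset (w : Tuples k n a) : {s : Finset (Fin n) // s.card = k} :=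
  ⟨Finset.image (tf w) Finset.univ, by
    rw [Finset.card_image_of_injective _ (tf_strictMono w).injective, Finset.card_univ,
      Fintype.card_fin]⟩

private def ofFinset (s : {s : Finset (Fin n) // s.card = k}) : Tuples k n a := by
  refine ⟨fun i => a + ((s.1.orderEmbOfFin s.2 i.rev : Fin n) : ℤ), ?_, ?_⟩
  · intro i j hij
    have h1 : j.rev < i.rev := by rwa [Fin.rev_lt_rev]
    have h2 := (s.1.orderEmbOfFin s.2).strictMono h1
    have h3 : ((s.1.orderEmbOfFin s.2 j.rev : Fin n) : ℤ) < (s.1.orderEmbOfFin s.2 i.rev : Fin n) := by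
      exact_mod_cast h2
    show a + _ < a + _
    omega
  · intro i
    have h1 := (s.1.orderEmbOfFin s.2 i.rev).isLt
    have h2 : ((s.1.orderEmbOfFin s.2 i.rev : Fin n) : ℤ) < n := by exact_mod_cast h1
    have h3 : (0:ℤ) ≤ ((s.1.orderEmbOfFin s.2 i.rev : Fin n) : ℤ) := by positivity
    constructor
    · show a ≤ a + _; omega
    · show a + _ ≤ a + n - 1; omega

lemma cardA (k n : ℕ) (a : ℤ) : Nat.card (Tuples k n a) = n.choose k := by
  have key : Nat.card (Tuples k n a) = Nat.card {s : Finset (Fin n) // s.card = k} := by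
    apply Nat.card_congr
    refine ⟨toFinset, ofFinset, ?_, ?_⟩
    · intro w
      have huniq : tf w = ⇑((toFinset w).1.orderEmbOfFin (toFinset w).2) := by
        apply Finset.orderEmbOfFin_unique
        · intro x
          exact Finset.mem_image.2 ⟨x, Finset.mem_univ x, rfl⟩
        · exact tf_strictMono w
      apply Subtype.ext
      funext i
      show a + (((toFinset w).1.orderEmbOfFin (toFinset w).2 i.rev : Fin n) : ℤ) = w.1 i
      rw [← huniq]
      have h1 := (w.2.2 i).1
      simp only [tf, Fin.rev_rev]
      omega
    · rintro ⟨s, hsc⟩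
      apply Subtype.ext
      show Finset.image _ _ = s
      have hf : tf (ofFinset (a := a) ⟨s, hsc⟩) = ⇑(s.orderEmbOfFin hsc) := by
        funext i
        apply Fin.ext
        show ((_ : ℤ) + _ - _).toNat = _
        simp [Fin.rev_rev]
      rw [hf]
      ext x
      simp only [Finset.mem_image, Finset.mem_univ, true_and]
      constructor
      · rintro ⟨i, rfl⟩
        exact Finset.orderEmbOfFin_mem s hsc i
      · intro hx
        have : x ∈ Set.range (s.orderEmbOfFin hsc) := by
          rw [Finset.range_orderEmbOfFin]; exact hx
        obtain ⟨i, hi⟩ := this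
        exact ⟨i, hi⟩
  rw [key, Nat.card_eq_fintype_card, Fintype.card_finset_len, Fintype.card_fin]

end CardA


-- chain lemma
private lemma chain_lt {t : ℕ → ℤ} {d : ℕ} (ht : ∀ j, j + 2 ≤ d → t (j+2) < t j) :
    ∀ (k a : ℕ), a + 2*(k+1) ≤ d → t (a + 2*(k+1)) < t a := by
  intro k
  induction k with
  | zero =>
    intro a ha
    have h := ht a (by omega)
    have he : a + 2*(0+1) = a + 2 := by ring
    rw [he]
    exact h
  | succ k ih =>
    intro a ha
    have h1 := ht a (by omega)
    have h2 := ih (a+2) (by omega)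
    have he : a + 2*(k+1+1) = (a+2) + 2*(k+1) := by ring
    rw [he]
    exact h2.trans h1

private lemma step1_lt {u : ℕ → ℤ} {d : ℕ} (hu : ∀ j, j + 2 ≤ d → u (j+1) < u j) :
    ∀ (k a : ℕ), a + (k+1) + 1 ≤ d → u (a + (k+1)) < u a := by
  intro k
  induction k with
  | zero =>
    intro a ha
    exact hu a (by omega)
  | succ k ih =>
    intro a ha
    have h1 := hu a (by omega)
    have h2 := ih (a+1) (by omega)
    have he : a + (k+1+1) = (a+1) + (k+1) := by ring
    rw [he]
    exact h2.trans h1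

private def SetW (N d : ℕ) (l : ℤ) : Type :=
  {t : ℕ → ℤ // t 0 = l ∧ (∀ j, d ≤ j → t j = 0) ∧ (∀ j, j + 2 ≤ d → t (j+2) < t j) ∧
    0 ≤ t (d-1) ∧ (2 ≤ d → t 1 ≤ (N:ℤ) - 1 - l)}

private lemma cardS_eq_cardW (N d : ℕ) (l : ℤ) (hd : 1 ≤ d) (hl0 : 0 ≤ l)
    (hlN : l ≤ (N:ℤ) - 1) :
    Nat.card {v : Fin d → ℤ // StrictAnti v ∧ (∀ j, 0 ≤ v j ∧ v j ≤ (N : ℤ) - 1) ∧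
        ∑ j : Fin d, (-1 : ℤ) ^ (j : ℕ) * v j = l} = Nat.card (SetW N d l) := by
  apply Nat.card_congr
  refine ⟨fun v => ⟨tailS d v.1, ?_, ?_, ?_, ?_, ?_⟩,
      fun t => ⟨fun j : Fin d => t.1 (j : ℕ) + t.1 ((j : ℕ)+1), ?_, ?_, ?_⟩, ?_, ?_⟩
  · rw [tailS_zero]; exact v.2.2.2
  · intro j hj; exact tailS_of_ge v.1 hj
  · -- chain
    obtain ⟨v, hanti, hb, hsum⟩ := v
    intro j hj
    rw [tailS_rec v (show j < d by omega), tailS_rec v (show j+1 < d by omega)]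
    have h1 : ext0 d v j = v ⟨j, by omega⟩ := by simp [ext0, show j < d by omega]
    have h2 : ext0 d v (j+1) = v ⟨j+1, by omega⟩ := by simp [ext0, show j+1 < d by omega]
    have h3 : v ⟨j+1, by omega⟩ < v ⟨j, by omega⟩ := hanti (by simp [Fin.mk_lt_mk])
    rw [h1, h2]
    linarith
  · -- 0 ≤ t (d-1)
    obtain ⟨v, hanti, hb, hsum⟩ := v
    have h : d - 1 < d := by omega
    rw [tailS_rec v h, tailS_of_ge v (by omega)]
    have h1 : ext0 d v (d-1) = v ⟨d-1, h⟩ := by simp [ext0, h]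
    have h2 := (hb ⟨d-1, h⟩).1
    rw [h1]
    linarith
  · -- t 1 bound
    obtain ⟨v, hanti, hb, hsum⟩ := v
    intro h2d
    have h0 : (0:ℕ) < d := by omega
    have hr := tailS_rec v h0
    rw [tailS_zero v, hsum] at hr
    have h1 : ext0 d v 0 = v ⟨0, h0⟩ := by simp [ext0, h0]
    have h2 := (hb ⟨0, h0⟩).2
    rw [h1] at hr
    linarith
  · -- StrictAnti v from t
    obtain ⟨t, h0, hz, hc, hd1, h1N⟩ := t
    have hu : ∀ j, j + 2 ≤ d → (t (j+1) + t (j+1+1)) < (t j + t (j+1)) := by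
      intro j hj
      have := hc j hj
      linarith
    intro i j hij
    show t (j:ℕ) + t ((j:ℕ)+1) < t (i:ℕ) + t ((i:ℕ)+1)
    have hij' : (i:ℕ) < (j:ℕ) := hij
    have hjd : (j:ℕ) < d := j.isLt
    obtain ⟨k, hk⟩ : ∃ k, (j:ℕ) = (i:ℕ) + (k+1) := ⟨(j:ℕ) - (i:ℕ) - 1, by omega⟩
    have := step1_lt (u := fun m => t m + t (m+1)) (d := d) hu k (i:ℕ) (by omega)
    rw [hk]
    exact this
  · -- bounds
    obtain ⟨t, h0, hz, hc, hd1, h1N⟩ := t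
    have hu : ∀ j, j + 2 ≤ d → (t (j+1) + t (j+1+1)) < (t j + t (j+1)) := by
      intro j hj
      have := hc j hj
      linarith
    intro j
    have hjd : (j:ℕ) < d := j.isLt
    have hlow : 0 ≤ t (d-1) + t (d-1+1) := by
      have : t (d-1+1) = 0 := hz _ (by omega)
      rw [this]
      linarith
    have hup : t 0 + t 1 ≤ (N:ℤ) - 1 := by
      by_cases h2d : 2 ≤ d
      · have := h1N h2d
        rw [h0]
        linarith
      · have hd1' : d = 1 := by omega
        have : t 1 = 0 := hz 1 (by omega)
        rw [h0, this]
        linarith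
    constructor
    · show (0:ℤ) ≤ t (j:ℕ) + t ((j:ℕ)+1)
      rcases eq_or_lt_of_le (show (j:ℕ) ≤ d - 1 by omega) with heq | hlt
      · rw [heq]
        exact hlow
      · obtain ⟨k, hk⟩ : ∃ k, d - 1 = (j:ℕ) + (k+1) := ⟨d - 1 - (j:ℕ) - 1, by omega⟩
        have h5 : t (d-1) + t (d-1+1) < t (j:ℕ) + t ((j:ℕ)+1) := by
          have h6 := step1_lt (u := fun m => t m + t (m+1)) (d := d) hu k (j:ℕ) (by omega)
          rw [← hk] at h6
          exact h6
        linarith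
    · show t (j:ℕ) + t ((j:ℕ)+1) ≤ (N:ℤ) - 1
      rcases Nat.eq_zero_or_pos (j:ℕ) with heq | hpos
      · rw [heq]
        exact hup
      · obtain ⟨k, hk⟩ : ∃ k, (j:ℕ) = (k+1) := ⟨(j:ℕ) - 1, by omega⟩
        have h5 : t (k+1) + t (k+1+1) < t 0 + t (0+1) := by
          have h6 := step1_lt (u := fun m => t m + t (m+1)) (d := d) hu k 0 (by omega)
          simpa using h6
        rw [hk]
        simp only [Nat.zero_add] at h5
        linarith
  · -- sum
    obtain ⟨t, h0, hz, hc, hd1, h1N⟩ := t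
    show ∑ j : Fin d, (-1 : ℤ)^(j:ℕ) * (t (j:ℕ) + t ((j:ℕ)+1)) = l
    have h1 : ∀ (m : ℕ), (-1:ℤ)^m * (t m + t (m+1))
        = (fun i => (-1:ℤ)^i * t i) m - (fun i => (-1:ℤ)^i * t i) (m+1) := by
      intro m
      simp only [pow_succ]
      ring
    calc ∑ j : Fin d, (-1 : ℤ)^(j:ℕ) * (t (j:ℕ) + t ((j:ℕ)+1))
        = ∑ m ∈ Finset.range d, (-1 : ℤ)^m * (t m + t (m+1)) :=
          Fin.sum_univ_eq_sum_range (fun m => (-1 : ℤ)^m * (t m + t (m+1))) d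
      _ = ∑ m ∈ Finset.range d,
            ((fun i => (-1:ℤ)^i * t i) m - (fun i => (-1:ℤ)^i * t i) (m+1)) :=
          Finset.sum_congr rfl (fun m _ => h1 m)
      _ = (-1:ℤ)^0 * t 0 - (-1:ℤ)^d * t d := Finset.sum_range_sub' _ d
      _ = l := by rw [h0, hz d (le_refl d)]; ring
  · -- left inverse
    rintro ⟨v, hanti, hb, hsum⟩
    apply Subtype.ext
    funext i
    show tailS d v (i:ℕ) + tailS d v ((i:ℕ)+1) = v i
    have hr := tailS_rec v i.isLt
    have h1 : ext0 d v (i:ℕ) = v i := by simp [ext0, i.isLt]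
    rw [h1] at hr
    linarith
  · -- right inverse
    rintro ⟨t, h0, hz, hc, hd1, h1N⟩
    apply Subtype.ext
    funext j
    exact tailS_eq_of _ t hz (fun m hm => rfl) j

private def glue (d : ℕ) (l : ℤ) (e' o' : ℕ → ℤ) : ℕ → ℤ := fun j =>
  if j = 0 then l else if d ≤ j then 0 else if j % 2 = 1 then o' (j/2) else e' (j/2 - 1)

private lemma glue_zero {d : ℕ} {l : ℤ} {e' o' : ℕ → ℤ} : glue d l e' o' 0 = l := if_pos rfl

private lemma glue_ge {d : ℕ} {l : ℤ} {e' o' : ℕ → ℤ} {j : ℕ} (hd : 1 ≤ d) (h : d ≤ j) :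
    glue d l e' o' j = 0 := by
  unfold glue; rw [if_neg (by omega), if_pos h]

private lemma glue_odd {d : ℕ} {l : ℤ} {e' o' : ℕ → ℤ} {j : ℕ} (h1 : j % 2 = 1) (h2 : j < d) :
    glue d l e' o' j = o' (j/2) := by
  unfold glue; rw [if_neg (by omega), if_neg (by omega), if_pos h1]

private lemma glue_even {d : ℕ} {l : ℤ} {e' o' : ℕ → ℤ} {j : ℕ} (h0 : j ≠ 0) (h1 : j % 2 = 0)
    (h2 : j < d) : glue d l e' o' j = e' (j/2 - 1) := by
  unfold glue; rw [if_neg h0, if_neg (by omega), if_neg (by omega)]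


private lemma glue_eval {d : ℕ} {l : ℤ} (hd : 1 ≤ d) (t : ℕ → ℤ) (h0 : t 0 = l)
    (hz : ∀ j, d ≤ j → t j = 0) (j : ℕ) :
    glue d l (ext0 ((d-1)/2) (fun i : Fin ((d-1)/2) => t (2*(i:ℕ)+2)))
      (ext0 (d/2) (fun i : Fin (d/2) => t (2*(i:ℕ)+1))) j = t j := by
  rcases Nat.eq_zero_or_pos j with rfl | hjpos
  · rw [glue_zero, h0]
  · by_cases hjd : d ≤ j
    · rw [glue_ge hd hjd, hz j hjd]
    · rcases Nat.even_or_odd j with hje | hjo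
      · have hj2 : j % 2 = 0 := Nat.even_iff.mp hje
        rw [glue_even (by omega) hj2 (by omega), ext0_lt _ (show j/2-1 < (d-1)/2 by omega)]
        show t (2*(j/2-1)+2) = t j
        congr 1
        omega
      · have hj2 : j % 2 = 1 := Nat.odd_iff.mp hjo
        rw [glue_odd hj2 (by omega), ext0_lt _ (show j/2 < d/2 by omega)]
        show t (2*(j/2)+1) = t j
        congr 1
        omega

private lemma glue_eval_e {d : ℕ} {l : ℤ} (e : Fin ((d-1)/2) → ℤ) (o : Fin (d/2) → ℤ)
    (i : Fin ((d-1)/2)) :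
    glue d l (ext0 _ e) (ext0 _ o) (2*(i:ℕ)+2) = e i := by
  have hik : (i:ℕ) < (d-1)/2 := i.isLt
  rw [glue_even (by omega) (by omega) (by omega),
    ext0_lt e (show (2*(i:ℕ)+2)/2-1 < (d-1)/2 by omega)]
  congr 1
  apply Fin.ext
  show (2*(i:ℕ)+2)/2-1 = (i:ℕ)
  omega

private lemma glue_eval_o {d : ℕ} {l : ℤ} (e : Fin ((d-1)/2) → ℤ) (o : Fin (d/2) → ℤ)
    (i : Fin (d/2)) :
    glue d l (ext0 _ e) (ext0 _ o) (2*(i:ℕ)+1) = o i := by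
  have hik : (i:ℕ) < d/2 := i.isLt
  rw [glue_odd (by omega) (by omega), ext0_lt o (show (2*(i:ℕ)+1)/2 < d/2 by omega)]
  congr 1
  apply Fin.ext
  show (2*(i:ℕ)+1)/2 = (i:ℕ)
  omega

private lemma cardW_eq (N d : ℕ) (l : ℤ) (aE aO : ℤ)
    (hpar : (d % 2 = 0 ∧ aE = 1 ∧ aO = 0) ∨ (d % 2 = 1 ∧ aE = 0 ∧ aO = 1))
    (hd : 1 ≤ d) (hl0 : 0 ≤ l) (hl1 : d % 2 = 0 → 1 ≤ l) :
    Nat.card (SetW N d l) =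
      Nat.card {e : Fin ((d-1)/2) → ℤ // StrictAnti e ∧ ∀ i, aE ≤ e i ∧ e i ≤ l - 1} *
      Nat.card {o : Fin (d/2) → ℤ // StrictAnti o ∧ ∀ i, aO ≤ o i ∧ o i ≤ (N:ℤ) - 1 - l} := by
  have haE0 : 0 ≤ aE := by rcases hpar with ⟨_, h, _⟩ | ⟨_, h, _⟩ <;> omega
  have haO0 : 0 ≤ aO := by rcases hpar with ⟨_, _, h⟩ | ⟨_, _, h⟩ <;> omega
  have haE1 : d % 2 = 0 → aE = 1 := by rcases hpar with ⟨h, h2, _⟩ | ⟨h, _, _⟩ <;> omega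
  have haO1 : d % 2 = 1 → aO = 1 := by rcases hpar with ⟨h, _, _⟩ | ⟨h, _, h2⟩ <;> omega
  rw [← Nat.card_prod]
  apply Nat.card_congr
  refine ⟨fun t => ⟨⟨fun i => t.1 (2*(i:ℕ)+2), ?_, ?_⟩, ⟨fun i => t.1 (2*(i:ℕ)+1), ?_, ?_⟩⟩,
      fun p => ⟨glue d l (ext0 _ p.1.1) (ext0 _ p.2.1), ?_, ?_, ?_, ?_, ?_⟩, ?_, ?_⟩
  · -- E strictAnti
    obtain ⟨t, h0, hz, hc, hd1, h1N⟩ := t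
    intro i j hij
    show t (2*(j:ℕ)+2) < t (2*(i:ℕ)+2)
    have hij' : (i:ℕ) < (j:ℕ) := hij
    have hjk : (j:ℕ) < (d-1)/2 := j.isLt
    obtain ⟨k, hk⟩ : ∃ k, 2*(j:ℕ)+2 = (2*(i:ℕ)+2) + 2*(k+1) := ⟨(j:ℕ)-(i:ℕ)-1, by omega⟩
    rw [hk]
    exact chain_lt hc k _ (by omega)
  · -- E bounds
    obtain ⟨t, h0, hz, hc, hd1, h1N⟩ := t
    intro i
    have hik : (i:ℕ) < (d-1)/2 := i.isLt
    constructor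
    · show aE ≤ t (2*(i:ℕ)+2)
      rcases Nat.even_or_odd d with hde | hdo
      · have hd2 : d % 2 = 0 := Nat.even_iff.mp hde
        rw [haE1 hd2]
        obtain ⟨k, hk⟩ : ∃ k, (2*(i:ℕ)+2) + 2*(k+1) = d := ⟨(d - (2*(i:ℕ)+2))/2 - 1, by omega⟩
        have := chain_lt hc k (2*(i:ℕ)+2) (by omega)
        rw [hk, hz d (le_refl d)] at this
        omega
      · have hd2 : d % 2 = 1 := Nat.odd_iff.mp hdo
        have haE : aE = 0 := by rcases hpar with ⟨h, _, _⟩ | ⟨_, h2, _⟩ <;> omega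
        rw [haE]
        rcases eq_or_lt_of_le (show 2*(i:ℕ)+2 ≤ d - 1 by omega) with heq | hlt
        · rw [heq]; exact hd1
        · obtain ⟨k, hk⟩ : ∃ k, (2*(i:ℕ)+2) + 2*(k+1) = d - 1 := ⟨(d-1-(2*(i:ℕ)+2))/2 - 1, by omega⟩
          have := chain_lt hc k (2*(i:ℕ)+2) (by omega)
          rw [hk] at this
          omega
    · show t (2*(i:ℕ)+2) ≤ l - 1
      have := chain_lt hc (i:ℕ) 0 (by omega)
      simp only [Nat.zero_add] at this
      rw [show 2*((i:ℕ)+1) = 2*(i:ℕ)+2 by ring] at this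
      rw [h0] at this
      omega
  · -- O strictAnti
    obtain ⟨t, h0, hz, hc, hd1, h1N⟩ := t
    intro i j hij
    show t (2*(j:ℕ)+1) < t (2*(i:ℕ)+1)
    have hij' : (i:ℕ) < (j:ℕ) := hij
    have hjk : (j:ℕ) < d/2 := j.isLt
    obtain ⟨k, hk⟩ : ∃ k, 2*(j:ℕ)+1 = (2*(i:ℕ)+1) + 2*(k+1) := ⟨(j:ℕ)-(i:ℕ)-1, by omega⟩
    rw [hk]
    exact chain_lt hc k _ (by omega)
  · -- O bounds
    obtain ⟨t, h0, hz, hc, hd1, h1N⟩ := t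
    intro i
    have hik : (i:ℕ) < d/2 := i.isLt
    constructor
    · show aO ≤ t (2*(i:ℕ)+1)
      rcases Nat.even_or_odd d with hde | hdo
      · have hd2 : d % 2 = 0 := Nat.even_iff.mp hde
        have haO : aO = 0 := by rcases hpar with ⟨_, _, h⟩ | ⟨h, _, _⟩ <;> omega
        rw [haO]
        rcases eq_or_lt_of_le (show 2*(i:ℕ)+1 ≤ d - 1 by omega) with heq | hlt
        · rw [heq]; exact hd1
        · obtain ⟨k, hk⟩ : ∃ k, (2*(i:ℕ)+1) + 2*(k+1) = d - 1 := ⟨(d-1-(2*(i:ℕ)+1))/2 - 1, by omega⟩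
          have := chain_lt hc k (2*(i:ℕ)+1) (by omega)
          rw [hk] at this
          omega
      · have hd2 : d % 2 = 1 := Nat.odd_iff.mp hdo
        rw [haO1 hd2]
        obtain ⟨k, hk⟩ : ∃ k, (2*(i:ℕ)+1) + 2*(k+1) = d := ⟨(d - (2*(i:ℕ)+1))/2 - 1, by omega⟩
        have := chain_lt hc k (2*(i:ℕ)+1) (by omega)
        rw [hk, hz d (le_refl d)] at this
        omega
    · show t (2*(i:ℕ)+1) ≤ (N:ℤ) - 1 - l
      have h2d : 2 ≤ d := by omega
      have ht1 := h1N h2d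
      rcases Nat.eq_zero_or_pos (i:ℕ) with heq | hpos
      · rw [heq]; simpa using ht1
      · obtain ⟨k, hk⟩ : ∃ k, 2*(i:ℕ)+1 = 1 + 2*(k+1) := ⟨(i:ℕ)-1, by omega⟩
        have := chain_lt hc k 1 (by omega)
        rw [← hk] at this
        omega
  · -- glue: t 0 = l
    exact glue_zero
  · -- glue: vanishing
    intro j hj
    exact glue_ge hd hj
  · -- glue: chain
    obtain ⟨⟨e, he, hbe⟩, ⟨o, ho, hbo⟩⟩ := p
    intro j hj
    rcases Nat.eq_zero_or_pos j with rfl | hjpos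
    · -- j = 0 : glue 2 < l
      rw [glue_zero]
      rcases eq_or_lt_of_le hj with heq | hlt
      · rw [glue_ge hd (by omega)]
        have := hl1 (by omega)
        omega
      · rw [glue_even (by omega) (by omega) (by omega), ext0_lt e (show 2/2-1 < (d-1)/2 by omega)]
        have := (hbe ⟨2/2-1, by omega⟩).2
        omega
    · rcases eq_or_lt_of_le hj with heq | hlt
      · -- j + 2 = d
        rw [glue_ge hd (by omega)]
        rcases Nat.even_or_odd j with hje | hjo
        · have hj2 : j % 2 = 0 := Nat.even_iff.mp hje
          have hd2 : d % 2 = 0 := by omega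
          rw [glue_even (by omega) hj2 (by omega), ext0_lt e (show j/2-1 < (d-1)/2 by omega)]
          have := (hbe ⟨j/2-1, by omega⟩).1
          rw [haE1 hd2] at this
          omega
        · have hj2 : j % 2 = 1 := Nat.odd_iff.mp hjo
          have hd2 : d % 2 = 1 := by omega
          rw [glue_odd hj2 (by omega), ext0_lt o (show j/2 < d/2 by omega)]
          have := (hbo ⟨j/2, by omega⟩).1
          rw [haO1 hd2] at this
          omega
      · -- j + 2 ≤ d - 1 : interior
        rcases Nat.even_or_odd j with hje | hjo
        · have hj2 : j % 2 = 0 := Nat.even_iff.mp hje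
          rw [glue_even (by omega) hj2 (by omega), glue_even (by omega) (by omega) (by omega)]
          rw [ext0_lt e (show (j+2)/2-1 < (d-1)/2 by omega), ext0_lt e (show j/2-1 < (d-1)/2 by omega)]
          exact he (show (⟨j/2-1, by omega⟩ : Fin ((d-1)/2)) < ⟨(j+2)/2-1, by omega⟩ by
            rw [Fin.mk_lt_mk]; omega)
        · have hj2 : j % 2 = 1 := Nat.odd_iff.mp hjo
          rw [glue_odd (by omega) (by omega), glue_odd hj2 (by omega)]
          rw [ext0_lt o (show (j+2)/2 < d/2 by omega), ext0_lt o (show j/2 < d/2 by omega)]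
          exact ho (show (⟨j/2, by omega⟩ : Fin (d/2)) < ⟨(j+2)/2, by omega⟩ by
            rw [Fin.mk_lt_mk]; omega)
  · -- glue : 0 ≤ t (d-1)
    obtain ⟨⟨e, he, hbe⟩, ⟨o, ho, hbo⟩⟩ := p
    rcases eq_or_lt_of_le hd with heq | hlt
    · subst heq
      show (0:ℤ) ≤ glue 1 l _ _ 0
      rw [glue_zero]; exact hl0
    · rcases Nat.even_or_odd d with hde | hdo
      · have hd2 : d % 2 = 0 := Nat.even_iff.mp hde
        rw [glue_odd (by omega) (by omega), ext0_lt o (show (d-1)/2 < d/2 by omega)]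
        have := (hbo ⟨(d-1)/2, by omega⟩).1
        omega
      · have hd2 : d % 2 = 1 := Nat.odd_iff.mp hdo
        rw [glue_even (by omega) (by omega) (by omega),
          ext0_lt e (show (d-1)/2-1 < (d-1)/2 by omega)]
        have := (hbe ⟨(d-1)/2-1, by omega⟩).1
        omega
  · -- glue : t 1 bound
    obtain ⟨⟨e, he, hbe⟩, ⟨o, ho, hbo⟩⟩ := p
    intro h2d
    rw [glue_odd (by omega) (by omega), ext0_lt o (show 1/2 < d/2 by omega)]
    exact (hbo ⟨1/2, by omega⟩).2
  · -- left inverse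
    rintro ⟨t, h0, hz, hc, hd1, h1N⟩
    exact Subtype.ext (funext fun j => glue_eval hd t h0 hz j)
  · -- right inverse
    rintro ⟨⟨e, he, hbe⟩, ⟨o, ho, hbo⟩⟩
    refine Prod.ext (Subtype.ext (funext fun i => ?_)) (Subtype.ext (funext fun i => ?_))
    · exact glue_eval_e (l := l) e o i
    · exact glue_eval_o (l := l) e o i


private lemma intChoose_nonneg {a : ℤ} (h : 0 ≤ a) (b : ℕ) :
    intChoose a b = (a.toNat.choose b : ℤ) := if_neg (by omega)

private lemma card_interval (k : ℕ) (a b : ℤ) (hab : a - 1 ≤ b) :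
    Nat.card {w : Fin k → ℤ // StrictAnti w ∧ ∀ i, a ≤ w i ∧ w i ≤ b}
      = (b - a + 1).toNat.choose k := by
  have hn : ((b - a + 1).toNat : ℤ) = b - a + 1 := by omega
  rw [← cardA k (b - a + 1).toNat a]
  apply Nat.card_congr
  apply Equiv.subtypeEquivRight
  intro w
  constructor
  · rintro ⟨h1, h2⟩
    exact ⟨h1, fun i => by have := h2 i; constructor <;> [exact this.1; omega]⟩
  · rintro ⟨h1, h2⟩
    exact ⟨h1, fun i => by have := h2 i; constructor <;> [exact this.1; omega]⟩

end AQ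

theorem stmt_0 (N d : ℕ) (hN : 2 ≤ N) (hd1 : 1 ≤ d) (hdN : d ≤ N)
    (l : ℤ) (hl0 : 0 ≤ l) (hlN : l ≤ (N : ℤ) - 1) :
    (Nat.card {v : Fin d → ℤ // StrictAnti v ∧
        (∀ j, 0 ≤ v j ∧ v j ≤ (N : ℤ) - 1) ∧
        ∑ j : Fin d, (-1 : ℤ) ^ (j : ℕ) * v j = l} : ℤ) =
      if Even d then
        intChoose (l - 1) ((d - 1) / 2) * intChoose ((N : ℤ) - l) (d / 2)
      else
        intChoose l ((d - 1) / 2) * intChoose ((N : ℤ) - l - 1) (d / 2) := by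
  rw [cardS_eq_cardW N d l hd1 hl0 hlN]
  by_cases hpar : Even d
  · have hd2 : d % 2 = 0 := Nat.even_iff.mp hpar
    rw [if_pos hpar]
    by_cases hl : 1 ≤ l
    · rw [cardW_eq N d l 1 0 (Or.inl ⟨hd2, rfl, rfl⟩) hd1 hl0 (fun _ => hl),
        card_interval _ 1 (l-1) (by omega), card_interval _ 0 ((N:ℤ)-1-l) (by omega),
        show l - 1 - 1 + 1 = l - 1 by ring, show (N:ℤ)-1-l-0+1 = (N:ℤ)-l by ring,
        intChoose_nonneg (by omega) ((d-1)/2), intChoose_nonneg (by omega : (0:ℤ) ≤ (N:ℤ)-l) (d/2)]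
      push_cast
      ring
    · have hl0' : l = 0 := by omega
      subst hl0'
      have hempty : IsEmpty (SetW N d 0) := by
        constructor
        rintro ⟨t, h0, hz, hc, hd1', h1N⟩
        have h1 := chain_lt hc (d/2 - 1) 0 (by omega)
        rw [show 0 + 2*(d/2-1+1) = d by omega, hz d (le_refl d), h0] at h1
        exact absurd h1 (by norm_num)
      rw [Nat.card_of_isEmpty]
      simp [intChoose]
  · have hd2 : d % 2 = 1 := Nat.odd_iff.mp (Nat.odd_iff.mpr (by
      rcases Nat.even_or_odd d with h | h
      · exact absurd h hpar
      · exact Nat.odd_iff.mp h))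
    rw [if_neg hpar]
    rw [cardW_eq N d l 0 1 (Or.inr ⟨hd2, rfl, rfl⟩) hd1 hl0 (fun h => by omega),
      card_interval _ 0 (l-1) (by omega), card_interval _ 1 ((N:ℤ)-1-l) (by omega),
      show l - 1 - 0 + 1 = l by ring, show (N:ℤ)-1-l-1+1 = (N:ℤ)-l-1 by ring,
      intChoose_nonneg (by omega) ((d-1)/2), intChoose_nonneg (by omega : (0:ℤ) ≤ (N:ℤ)-l-1) (d/2)]
    push_cast
    ring
end

section
/- For all integers N ≥ 1, d ≥ 1, and l, the number of tuples (l_1,...,l_d) with N ≥ l_1 > ... > l_d ≥ 1 and alternating sum equal to l is C(l-1, ⌊(d-1)/2⌋)·C(N-l, ⌊d/2⌋). -/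
open Finset


noncomputable def smEquiv (s : Finset ℤ) (k : ℕ) :
    {f : Fin k → ℤ // StrictMono f ∧ ∀ i, f i ∈ s} ≃ (s.powersetCard k) where
  toFun f := ⟨Finset.image f.1 Finset.univ, by
    rw [Finset.mem_powersetCard]
    refine ⟨fun x hx => ?_, ?_⟩
    · obtain ⟨i, -, rfl⟩ := Finset.mem_image.1 hx; exact f.2.2 i
    · rw [Finset.card_image_of_injective _ f.2.1.injective, Finset.card_univ,
        Fintype.card_fin]⟩
  invFun t := ⟨t.1.orderEmbOfFin (Finset.mem_powersetCard.1 t.2).2,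
    (t.1.orderEmbOfFin (Finset.mem_powersetCard.1 t.2).2).strictMono,
    fun i => (Finset.mem_powersetCard.1 t.2).1 (Finset.orderEmbOfFin_mem _ _ i)⟩
  left_inv f := Subtype.ext
    (Finset.orderEmbOfFin_unique _
      (fun i => Finset.mem_image_of_mem _ (Finset.mem_univ i)) f.2.1).symm
  right_inv t := Subtype.ext (by
    have h := Finset.range_orderEmbOfFin t.1 (Finset.mem_powersetCard.1 t.2).2
    rw [← Finset.coe_inj, Finset.coe_image, Finset.coe_univ, Set.image_univ, h])

lemma card_strictMono_mem (s : Finset ℤ) (k : ℕ) :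
    Nat.card {f : Fin k → ℤ // StrictMono f ∧ ∀ i, f i ∈ s} = s.card.choose k := by
  rw [Nat.card_congr (smEquiv s k), Nat.card_eq_finsetCard, Finset.card_powersetCard]

variable {k : ℕ}

/-- Partial sums. -/
def psum (x : Fin k → ℤ) (i : Fin k) : ℤ := ∑ j ∈ Finset.univ.filter (fun j => j ≤ i), x j

/-- Differences (inverse of psum). -/
def dsum (f : Fin k → ℤ) (i : Fin k) : ℤ :=
  f i - (if h : (i : ℕ) = 0 then 0 else f ⟨(i : ℕ) - 1, by omega⟩)

lemma psum_zero (x : Fin k → ℤ) (i : Fin k) (hi : (i : ℕ) = 0) : psum x i = x i := by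
  have : Finset.univ.filter (fun j => j ≤ i) = {i} := by
    ext j
    simp only [Finset.mem_filter, Finset.mem_univ, true_and, Finset.mem_singleton,
      Fin.le_def, Fin.ext_iff]
    omega
  rw [psum, this, Finset.sum_singleton]

lemma psum_succ (x : Fin k → ℤ) (i : Fin k) (m : ℕ) (hi : (i : ℕ) = m + 1) :
    psum x i = psum x ⟨m, by omega⟩ + x i := by
  have : Finset.univ.filter (fun j => j ≤ i) =
      insert i (Finset.univ.filter (fun j => j ≤ (⟨m, by omega⟩ : Fin k))) := by
    ext j
    simp only [Finset.mem_filter, Finset.mem_univ, true_and, Finset.mem_insert,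
      Fin.le_def, Fin.ext_iff]
    omega
  rw [psum, this, Finset.sum_insert (by
    simp only [Finset.mem_filter, Finset.mem_univ, true_and, Fin.le_def]
    omega)]
  rw [add_comm]; rfl

lemma dsum_psum (x : Fin k → ℤ) : dsum (psum x) = x := by
  funext i
  rcases Nat.eq_zero_or_eq_succ_pred (i : ℕ) with h | h
  · rw [dsum, dif_pos h, psum_zero x i h, sub_zero]
  · rw [dsum, dif_neg (by omega), psum_succ x i ((i : ℕ) - 1) (by omega)]
    ring

lemma psum_dsum (f : Fin k → ℤ) : psum (dsum f) = f := by
  funext i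
  obtain ⟨m, hm⟩ := i
  induction m with
  | zero => rw [psum_zero _ _ rfl, dsum, dif_pos rfl, sub_zero]
  | succ n ih =>
      rw [psum_succ _ _ n rfl, ih (by omega), dsum, dif_neg (by simp)]
      norm_num

lemma pos_iff (x : Fin (k+1) → ℤ) :
    (∀ t, 1 ≤ x t) ↔ (StrictMono (psum x) ∧ ∀ i, 1 ≤ psum x i) := by
  constructor
  · intro hx
    have hsm : StrictMono (psum x) := by
      rw [Fin.strictMono_iff_lt_succ]
      intro i
      rw [psum_succ x i.succ (i : ℕ) (by simp)]
      have he : (⟨(i : ℕ), by omega⟩ : Fin (k+1)) = i.castSucc := by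
        ext; simp
      rw [he]
      have := hx i.succ
      linarith
    refine ⟨hsm, fun i => ?_⟩
    obtain ⟨m, hm⟩ := i
    induction m with
    | zero => rw [psum_zero x _ rfl]; exact hx _
    | succ n ih =>
        rw [psum_succ x _ n rfl]
        have h1 := hx ⟨n + 1, hm⟩
        have h2 := ih (by omega)
        linarith
  · rintro ⟨hsm, h1⟩ t
    obtain ⟨m, hm⟩ := t
    cases m with
    | zero => rw [← psum_zero x ⟨0, hm⟩ rfl]; exact h1 _
    | succ n =>
        have hlt : psum x ⟨n, by omega⟩ < psum x ⟨n + 1, hm⟩ := hsm (by simp [Fin.lt_def])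
        rw [psum_succ x ⟨n + 1, hm⟩ n rfl] at hlt
        linarith

lemma sum_eq_psum_last (x : Fin (k+1) → ℤ) : ∑ t, x t = psum x (Fin.last k) := by
  rw [psum]
  congr 1
  ext j
  simp [Fin.le_last]

lemma geo (u t : ℕ) :
    ∑ i ∈ Finset.Ico t (t + u), (-1 : ℤ) ^ (t + u - 1 - i) =
      if u % 2 = 1 then 1 else 0 := by
  induction u generalizing t with
  | zero => simp
  | succ u ih =>
      have hsplit : Finset.Ico t (t + (u + 1)) = insert t (Finset.Ico (t + 1) ((t + 1) + u)) := by
        ext i; simp [Finset.mem_Ico]; omega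
      rw [hsplit, Finset.sum_insert (by simp)]
      have hcong : ∑ i ∈ Finset.Ico (t + 1) ((t + 1) + u), (-1 : ℤ) ^ (t + (u + 1) - 1 - i) =
          ∑ i ∈ Finset.Ico (t + 1) ((t + 1) + u), (-1 : ℤ) ^ ((t + 1) + u - 1 - i) := by
        apply Finset.sum_congr rfl
        intro i hi
        congr 1
        omega
      rw [hcong, ih (t + 1)]
      have : t + (u + 1) - 1 - t = u := by omega
      rw [this]
      rcases Nat.even_or_odd u with h | h
      · rw [h.neg_one_pow]
        have h2 : u % 2 = 0 := Nat.even_iff.1 h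
        simp [h2, Nat.succ_mod_two_eq_one_iff.2 h2]
      · rw [h.neg_one_pow]
        have h2 : u % 2 = 1 := Nat.odd_iff.1 h
        simp [h2, Nat.succ_mod_two_eq_zero_iff.2 h2]

lemma eps_sum (d : ℕ) (t : Fin d) :
    ∑ i : Fin d, (if t ≤ i then (-1 : ℤ) ^ (d - 1 - (i : ℕ)) else 0) =
      if (t : ℕ) % 2 = (d - 1) % 2 then 1 else 0 := by
  have h1 : ∑ i : Fin d, (if t ≤ i then (-1 : ℤ) ^ (d - 1 - (i : ℕ)) else 0) =
      ∑ i ∈ Finset.range d, (if (t : ℕ) ≤ i then (-1 : ℤ) ^ (d - 1 - i) else 0) := by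
    rw [← Fin.sum_univ_eq_sum_range (fun i => if (t : ℕ) ≤ i then (-1 : ℤ) ^ (d - 1 - i) else 0) d]
    exact Finset.sum_congr rfl fun i _ => by simp only [Fin.le_def]
  rw [h1, ← Finset.sum_filter]
  have h2 : (Finset.range d).filter (fun i => (t : ℕ) ≤ i) = Finset.Ico (t : ℕ) d := by
    ext i; simp [Finset.mem_Ico, Finset.mem_filter]; omega
  have ht := t.isLt
  have h3 : d = (t : ℕ) + (d - (t : ℕ)) := by omega
  rw [h2]
  rw [show Finset.Ico (t : ℕ) d = Finset.Ico (t : ℕ) ((t : ℕ) + (d - (t : ℕ))) by rw [← h3]]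
  have h4 : ∀ i ∈ Finset.Ico (t : ℕ) ((t : ℕ) + (d - (t : ℕ))),
      (-1 : ℤ) ^ (d - 1 - i) = (-1 : ℤ) ^ ((t : ℕ) + (d - (t : ℕ)) - 1 - i) := by
    intro i hi; congr 1; omega
  rw [Finset.sum_congr rfl h4, geo]
  have : (d - (t : ℕ)) % 2 = 1 ↔ (t : ℕ) % 2 = (d - 1) % 2 := by omega
  by_cases hc : (t : ℕ) % 2 = (d - 1) % 2
  · rw [if_pos hc, if_pos (this.2 hc)]
  · rw [if_neg hc, if_neg (fun h => hc (this.1 h))]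

lemma altsum_psum (d : ℕ) (c : Fin d → ℤ) :
    ∑ i : Fin d, (-1 : ℤ) ^ (d - 1 - (i : ℕ)) * psum c i =
      ∑ t ∈ Finset.univ.filter (fun t : Fin d => (t : ℕ) % 2 = (d - 1) % 2), c t := by
  have h1 : ∀ i : Fin d, (-1 : ℤ) ^ (d - 1 - (i : ℕ)) * psum c i =
      ∑ t : Fin d, (if t ≤ i then (-1 : ℤ) ^ (d - 1 - (i : ℕ)) * c t else 0) := by
    intro i
    rw [psum, Finset.mul_sum, Finset.sum_filter]
  rw [Finset.sum_congr rfl (fun i _ => h1 i), Finset.sum_comm]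
  rw [Finset.sum_filter]
  apply Finset.sum_congr rfl
  intro t _
  have h2 : ∀ i : Fin d, (if t ≤ i then (-1 : ℤ) ^ (d - 1 - (i : ℕ)) * c t else 0) =
      (if t ≤ i then (-1 : ℤ) ^ (d - 1 - (i : ℕ)) else 0) * c t := by
    intro i; split <;> simp
  rw [Finset.sum_congr rfl (fun i _ => h2 i), ← Finset.sum_mul, eps_sum]
  split <;> simp

lemma altsum_rev (d : ℕ) (f : Fin d → ℤ) :
    ∑ j : Fin d, (-1 : ℤ) ^ (j : ℕ) * f (Fin.rev j) =
      ∑ i : Fin d, (-1 : ℤ) ^ (d - 1 - (i : ℕ)) * f i := by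
  rw [← Equiv.sum_comp Fin.revPerm (fun i : Fin d => (-1 : ℤ) ^ (d - 1 - (i : ℕ)) * f i)]
  apply Finset.sum_congr rfl
  intro j _
  have hj := j.isLt
  have : d - 1 - ((Fin.revPerm j : Fin d) : ℕ) = (j : ℕ) := by
    simp [Fin.val_rev]; omega
  rw [show (Fin.revPerm j : Fin d) = Fin.rev j from rfl]
  congr 1
  · rw [Fin.val_rev]; congr 1; omega

def tauFun (d : ℕ) (s : Fin ((d + 1) / 2) ⊕ Fin (d / 2)) : Fin d :=
  match s with
  | Sum.inl i => ⟨2 * (i : ℕ) + (d - 1) % 2, by have := i.isLt; omega⟩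
  | Sum.inr j => ⟨2 * (j : ℕ) + (1 - (d - 1) % 2), by have := j.isLt; omega⟩

def tauInv (d : ℕ) (t : Fin d) : Fin ((d + 1) / 2) ⊕ Fin (d / 2) :=
  if h : (t : ℕ) % 2 = (d - 1) % 2 then
    Sum.inl ⟨(t : ℕ) / 2, by have := t.isLt; omega⟩
  else
    Sum.inr ⟨(t : ℕ) / 2, by have := t.isLt; omega⟩

/-- Parity splitting of `Fin d`. -/
def tau (d : ℕ) : Fin ((d + 1) / 2) ⊕ Fin (d / 2) ≃ Fin d where
  toFun := tauFun d
  invFun := tauInv d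
  left_inv s := by
    rcases s with i | j
    · have hi := i.isLt
      rw [tauInv, dif_pos (by simp [tauFun])]
      congr 1
      ext
      simp [tauFun]
      omega
    · have hj := j.isLt
      rw [tauInv, dif_neg (by simp [tauFun]; omega)]
      congr 1
      ext
      simp [tauFun]
      omega
  right_inv t := by
    have ht := t.isLt
    by_cases hc : (t : ℕ) % 2 = (d - 1) % 2
    · rw [tauInv, dif_pos hc]
      ext
      simp [tauFun]
      omega
    · rw [tauInv, dif_neg hc]
      ext
      simp [tauFun]
      omega

lemma tau_inl_mod (d : ℕ) (i : Fin ((d + 1) / 2)) :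
    ((tau d (Sum.inl i) : Fin d) : ℕ) % 2 = (d - 1) % 2 := by
  have := i.isLt; simp [tau, tauFun]

lemma tau_inr_mod (d : ℕ) (j : Fin (d / 2)) :
    ¬ (((tau d (Sum.inr j) : Fin d) : ℕ) % 2 = (d - 1) % 2) := by
  have := j.isLt; simp [tau, tauFun]; omega

lemma filter_sum_eq (d : ℕ) (c : Fin d → ℤ) :
    ∑ t ∈ Finset.univ.filter (fun t : Fin d => (t : ℕ) % 2 = (d - 1) % 2), c t =
      ∑ i : Fin ((d + 1) / 2), c (tau d (Sum.inl i)) := by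
  rw [Finset.sum_filter]
  rw [← Equiv.sum_comp (tau d)
    (fun t : Fin d => if (t : ℕ) % 2 = (d - 1) % 2 then c t else 0)]
  rw [Fintype.sum_sum_type]
  have h1 : ∀ i : Fin ((d + 1) / 2),
      (if ((tau d (Sum.inl i) : Fin d) : ℕ) % 2 = (d - 1) % 2 then c (tau d (Sum.inl i)) else 0)
        = c (tau d (Sum.inl i)) := fun i => if_pos (tau_inl_mod d i)
  have h2 : ∀ j : Fin (d / 2),
      (if ((tau d (Sum.inr j) : Fin d) : ℕ) % 2 = (d - 1) % 2 then c (tau d (Sum.inr j)) else 0)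
        = 0 := fun j => if_neg (tau_inr_mod d j)
  rw [Finset.sum_congr rfl (fun i _ => h1 i), Finset.sum_congr rfl (fun j _ => h2 j)]
  simp

lemma total_sum_eq (d : ℕ) (c : Fin d → ℤ) :
    ∑ t : Fin d, c t =
      ∑ i : Fin ((d + 1) / 2), c (tau d (Sum.inl i)) +
      ∑ j : Fin (d / 2), c (tau d (Sum.inr j)) := by
  rw [← Equiv.sum_comp (tau d) c, Fintype.sum_sum_type]

def psEquiv (k : ℕ) : (Fin k → ℤ) ≃ (Fin k → ℤ) :=
  ⟨psum, dsum, dsum_psum, psum_dsum⟩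

lemma cardB (q : ℕ) (M : ℤ) :
    Nat.card {b : Fin q → ℤ // (∀ j, 1 ≤ b j) ∧ ∑ j, b j ≤ M} = intChoose M q := by
  cases q with
  | zero =>
      by_cases hM : 0 ≤ M
      · have : Nat.card {b : Fin 0 → ℤ // (∀ j, 1 ≤ b j) ∧ ∑ j, b j ≤ M} = 1 := by
          rw [Nat.card_eq_one_iff_unique]
          constructor
          · constructor
            intro x y
            apply Subtype.ext
            funext i
            exact Fin.elim0 i
          · refine ⟨⟨fun _ => 0, fun j => ?_, ?_⟩⟩
            · exact j.elim0
            · simpa using hM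
        rw [this, intChoose, if_neg (not_lt.2 hM)]
        simp
      · have : IsEmpty {b : Fin 0 → ℤ // (∀ j, 1 ≤ b j) ∧ ∑ j, b j ≤ M} := by
          constructor
          rintro ⟨b, -, hb⟩
          simp at hb
          omega
        rw [Nat.card_of_isEmpty, intChoose, if_pos (by omega : M < 0)]
        simp
  | succ k =>
      have e : {b : Fin (k+1) → ℤ // (∀ j, 1 ≤ b j) ∧ ∑ j, b j ≤ M} ≃
          {f : Fin (k+1) → ℤ // StrictMono f ∧ ∀ i, f i ∈ Finset.Icc 1 M} := by
        apply Equiv.subtypeEquiv (psEquiv (k+1))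
        intro b
        show _ ↔ StrictMono (psum b) ∧ ∀ i, psum b i ∈ Finset.Icc 1 M
        simp only [Finset.mem_Icc]
        constructor
        · rintro ⟨hb, hsum⟩
          obtain ⟨hsm, h1⟩ := (pos_iff b).1 hb
          refine ⟨hsm, fun i => ⟨h1 i, ?_⟩⟩
          calc psum b i ≤ psum b (Fin.last k) := hsm.monotone (Fin.le_last i)
            _ = ∑ t, b t := (sum_eq_psum_last b).symm
            _ ≤ M := hsum
        · rintro ⟨hsm, h⟩
          refine ⟨(pos_iff b).2 ⟨hsm, fun i => (h i).1⟩, ?_⟩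
          rw [sum_eq_psum_last b]
          exact (h (Fin.last k)).2
      rw [Nat.card_congr e, card_strictMono_mem, Int.card_Icc]
      have : (M + 1 - 1).toNat = M.toNat := by omega
      rw [this, intChoose]
      by_cases hM : M < 0
      · rw [if_pos hM, show M.toNat = 0 by omega, Nat.choose_eq_zero_of_lt (by omega)]
        simp
      · rw [if_neg hM]

/-- Drop-last equivalence for strictly monotone tuples ending at a prescribed value. -/
def snocEquiv (k : ℕ) (l : ℤ) (hl : 1 ≤ l) :
    {f : Fin (k+1) → ℤ // StrictMono f ∧ (∀ i, 1 ≤ f i) ∧ f (Fin.last k) = l} ≃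
    {g : Fin k → ℤ // StrictMono g ∧ ∀ i, g i ∈ Finset.Icc 1 (l - 1)} where
  toFun f := ⟨fun i => f.1 i.castSucc, by
    obtain ⟨hsm, h1, hlast⟩ := f.2
    refine ⟨fun i j hij => hsm (by simpa using hij), fun i => Finset.mem_Icc.2 ⟨h1 _, ?_⟩⟩
    have : f.1 i.castSucc < f.1 (Fin.last k) := hsm (Fin.castSucc_lt_last i)
    show f.1 i.castSucc ≤ l - 1
    omega⟩
  invFun g := ⟨Fin.snoc g.1 l, by
    obtain ⟨hsm, hmem⟩ := g.2
    have hlt : ∀ i : Fin k, g.1 i < l := fun i => by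
      have := (Finset.mem_Icc.1 (hmem i)).2; omega
    have h1 : ∀ i : Fin k, 1 ≤ g.1 i := fun i => (Finset.mem_Icc.1 (hmem i)).1
    refine ⟨?_, ?_, by simp⟩
    · intro i j hij
      rcases Fin.eq_castSucc_or_eq_last j with ⟨j', rfl⟩ | rfl
      · rcases Fin.eq_castSucc_or_eq_last i with ⟨i', rfl⟩ | rfl
        · rw [Fin.snoc_castSucc, Fin.snoc_castSucc]
          exact hsm (by simpa using hij)
        · exact absurd (lt_of_lt_of_le hij (Fin.castSucc_lt_last j').le) (lt_irrefl _)
      · rcases Fin.eq_castSucc_or_eq_last i with ⟨i', rfl⟩ | rfl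
        · rw [Fin.snoc_castSucc, Fin.snoc_last]
          exact hlt i'
        · exact absurd hij (lt_irrefl _)
    · intro i
      rcases Fin.eq_castSucc_or_eq_last i with ⟨i', rfl⟩ | rfl
      · rw [Fin.snoc_castSucc]; exact h1 i'
      · rw [Fin.snoc_last]; exact hl⟩
  left_inv f := by
    apply Subtype.ext
    show Fin.snoc (fun i => f.1 i.castSucc) l = f.1
    funext i
    rcases Fin.eq_castSucc_or_eq_last i with ⟨i', rfl⟩ | rfl
    · exact Fin.snoc_castSucc _ _ _
    · rw [Fin.snoc_last]; exact f.2.2.2.symm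
  right_inv g := by
    apply Subtype.ext
    show (fun i => (Fin.snoc (g.1 : Fin k → ℤ) l : Fin (k+1) → ℤ) (Fin.castSucc i)) = g.1
    funext i
    exact Fin.snoc_castSucc _ _ _

lemma cardA_s2 (p : ℕ) (hp : 1 ≤ p) (l : ℤ) :
    Nat.card {a : Fin p → ℤ // (∀ i, 1 ≤ a i) ∧ ∑ i, a i = l} =
      intChoose (l - 1) (p - 1) := by
  obtain ⟨k, rfl⟩ : ∃ k, p = k + 1 := ⟨p - 1, by omega⟩
  by_cases hl : 1 ≤ l
  · have e1 : {a : Fin (k+1) → ℤ // (∀ i, 1 ≤ a i) ∧ ∑ i, a i = l} ≃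
        {f : Fin (k+1) → ℤ // StrictMono f ∧ (∀ i, 1 ≤ f i) ∧ f (Fin.last k) = l} := by
      apply Equiv.subtypeEquiv (psEquiv (k+1))
      intro a
      show _ ↔ StrictMono (psum a) ∧ (∀ i, 1 ≤ psum a i) ∧ psum a (Fin.last k) = l
      constructor
      · rintro ⟨ha, hsum⟩
        obtain ⟨hsm, h1⟩ := (pos_iff a).1 ha
        exact ⟨hsm, h1, by rw [← sum_eq_psum_last a]; exact hsum⟩
      · rintro ⟨hsm, h1, hlast⟩
        exact ⟨(pos_iff a).2 ⟨hsm, h1⟩, by rw [sum_eq_psum_last a]; exact hlast⟩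
    rw [Nat.card_congr (e1.trans (snocEquiv k l hl)), card_strictMono_mem, Int.card_Icc]
    have h2 : (l - 1 + 1 - 1).toNat = (l - 1).toNat := by omega
    rw [h2, intChoose, if_neg (by omega)]
    simp
  · have : IsEmpty {a : Fin (k+1) → ℤ // (∀ i, 1 ≤ a i) ∧ ∑ i, a i = l} := by
      constructor
      rintro ⟨a, ha, hsum⟩
      have : ((k+1 : ℕ) : ℤ) ≤ ∑ i, a i := by
        calc ((k+1 : ℕ) : ℤ) = ∑ _i : Fin (k+1), (1 : ℤ) := by simp
          _ ≤ ∑ i, a i := Finset.sum_le_sum (fun i _ => ha i)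
      omega
    rw [Nat.card_of_isEmpty, intChoose, if_pos (by omega : l - 1 < 0)]
    simp

/-- Reversal-of-partial-sums equivalence. -/
def revPsEquiv (d : ℕ) : (Fin d → ℤ) ≃ (Fin d → ℤ) where
  toFun c := fun j => psum c (Fin.rev j)
  invFun v := dsum (fun i => v (Fin.rev i))
  left_inv c := by
    have h : (fun i => psum c (Fin.rev (Fin.rev i))) = psum c := by
      funext i; rw [Fin.rev_rev]
    show dsum (fun i => psum c (Fin.rev (Fin.rev i))) = c
    rw [h, dsum_psum]
  right_inv v := by
    funext j
    show psum (dsum (fun i => v (Fin.rev i))) (Fin.rev j) = v j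
    rw [psum_dsum, Fin.rev_rev]

/-- Splitting of a positive tuple along the parity decomposition. -/
noncomputable def splitEquiv (d : ℕ) (l M : ℤ) :
    {c : Fin d → ℤ // (∀ t, 1 ≤ c t) ∧ (∑ i : Fin ((d+1)/2), c (tau d (Sum.inl i)) = l) ∧
        (∑ j : Fin (d/2), c (tau d (Sum.inr j)) ≤ M)} ≃
      {a : Fin ((d+1)/2) → ℤ // (∀ i, 1 ≤ a i) ∧ ∑ i, a i = l} ×
      {b : Fin (d/2) → ℤ // (∀ j, 1 ≤ b j) ∧ ∑ j, b j ≤ M} where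
  toFun c := (⟨fun i => c.1 (tau d (Sum.inl i)), fun i => c.2.1 _, c.2.2.1⟩,
    ⟨fun j => c.1 (tau d (Sum.inr j)), fun j => c.2.1 _, c.2.2.2⟩)
  invFun ab := ⟨fun t => Sum.elim ab.1.1 ab.2.1 ((tau d).symm t), by
    refine ⟨fun t => ?_, ?_, ?_⟩
    · rcases h : (tau d).symm t with i | j
      · simpa [h] using ab.1.2.1 i
      · simpa [h] using ab.2.2.1 j
    · have : ∀ i : Fin ((d+1)/2),
          Sum.elim ab.1.1 ab.2.1 ((tau d).symm (tau d (Sum.inl i))) = ab.1.1 i := by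
        intro i; rw [Equiv.symm_apply_apply]; rfl
      rw [Finset.sum_congr rfl (fun i _ => this i)]
      exact ab.1.2.2
    · have : ∀ j : Fin (d/2),
          Sum.elim ab.1.1 ab.2.1 ((tau d).symm (tau d (Sum.inr j))) = ab.2.1 j := by
        intro j; rw [Equiv.symm_apply_apply]; rfl
      rw [Finset.sum_congr rfl (fun j _ => this j)]
      exact ab.2.2.2⟩
  left_inv c := by
    apply Subtype.ext
    funext t
    show Sum.elim (fun i => c.1 (tau d (Sum.inl i))) (fun j => c.1 (tau d (Sum.inr j)))
      ((tau d).symm t) = c.1 t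
    rcases h : (tau d).symm t with i | j
    · have := (tau d).apply_symm_apply t
      rw [h] at this
      simp [← this]
    · have := (tau d).apply_symm_apply t
      rw [h] at this
      simp [← this]
  right_inv ab := by
    refine Prod.ext (Subtype.ext ?_) (Subtype.ext ?_)
    · funext i
      show Sum.elim ab.1.1 ab.2.1 ((tau d).symm (tau d (Sum.inl i))) = ab.1.1 i
      rw [Equiv.symm_apply_apply]; rfl
    · funext j
      show Sum.elim ab.1.1 ab.2.1 ((tau d).symm (tau d (Sum.inr j))) = ab.2.1 j
      rw [Equiv.symm_apply_apply]; rfl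

theorem stmt_2 (N d : ℕ) (hN : 1 ≤ N) (hd : 1 ≤ d) (l : ℤ) :
    (Nat.card {v : Fin d → ℤ // StrictAnti v ∧
        (∀ j, 1 ≤ v j ∧ v j ≤ (N : ℤ)) ∧
        ∑ j : Fin d, (-1 : ℤ) ^ (j : ℕ) * v j = l} : ℤ) =
      intChoose (l - 1) ((d - 1) / 2) * intChoose ((N : ℤ) - l) (d / 2) := by
  obtain ⟨k, rfl⟩ : ∃ k, d = k + 1 := ⟨d - 1, by omega⟩
  set d := k + 1 with hdk
  -- main equivalence
  have e1 : {c : Fin d → ℤ // (∀ t, 1 ≤ c t) ∧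
        (∑ i : Fin ((d+1)/2), c (tau d (Sum.inl i)) = l) ∧
        (∑ j : Fin (d/2), c (tau d (Sum.inr j)) ≤ (N : ℤ) - l)} ≃
      {v : Fin d → ℤ // StrictAnti v ∧ (∀ j, 1 ≤ v j ∧ v j ≤ (N : ℤ)) ∧
        ∑ j : Fin d, (-1 : ℤ) ^ (j : ℕ) * v j = l} := by
    apply Equiv.subtypeEquiv (revPsEquiv d)
    intro c
    set f := psum c with hf
    show _ ↔ (StrictAnti (fun j => f (Fin.rev j)) ∧
      (∀ j, 1 ≤ f (Fin.rev j) ∧ f (Fin.rev j) ≤ (N : ℤ)) ∧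
      ∑ j : Fin d, (-1 : ℤ) ^ (j : ℕ) * f (Fin.rev j) = l)
    have halt : ∑ j : Fin d, (-1 : ℤ) ^ (j : ℕ) * f (Fin.rev j) =
        ∑ i : Fin ((d+1)/2), c (tau d (Sum.inl i)) := by
      rw [altsum_rev d f, hf, altsum_psum d c, filter_sum_eq d c]
    have hanti : StrictAnti (fun j => f (Fin.rev j)) ↔ StrictMono f := by
      constructor
      · intro h a b hab
        have := h (Fin.rev_lt_rev.2 hab)
        simpa [Fin.rev_rev] using this
      · intro h a b hab
        exact h (Fin.rev_lt_rev.2 hab)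
    have hbd : (∀ j, 1 ≤ f (Fin.rev j) ∧ f (Fin.rev j) ≤ (N : ℤ)) ↔
        (∀ i, 1 ≤ f i ∧ f i ≤ (N : ℤ)) := by
      constructor
      · intro h i
        have := h (Fin.rev i)
        rwa [Fin.rev_rev] at this
      · intro h j
        exact h (Fin.rev j)
    rw [hanti, hbd, halt]
    constructor
    · rintro ⟨hpos, hl, hle⟩
      obtain ⟨hsm, h1⟩ := (pos_iff c).1 hpos
      refine ⟨hsm, fun i => ⟨h1 i, ?_⟩, hl⟩
      calc f i ≤ f (Fin.last k) := hsm.monotone (Fin.le_last i)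
        _ = ∑ t, c t := (sum_eq_psum_last c).symm
        _ ≤ (N : ℤ) := by rw [total_sum_eq d c]; omega
    · rintro ⟨hsm, hb, hl⟩
      have hpos : ∀ t, 1 ≤ c t := (pos_iff c).2 ⟨hsm, fun i => (hb i).1⟩
      refine ⟨hpos, hl, ?_⟩
      have hsum : ∑ t, c t ≤ (N : ℤ) := by
        rw [sum_eq_psum_last c]
        exact (hb (Fin.last k)).2
      rw [total_sum_eq d c] at hsum
      omega
  rw [← Nat.card_congr e1, Nat.card_congr (splitEquiv d l ((N : ℤ) - l)), Nat.card_prod]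
  push_cast
  rw [cardA_s2 ((d+1)/2) (by omega) l, cardB (d/2) ((N : ℤ) - l)]
  rw [show (d+1)/2 - 1 = (d - 1)/2 from by omega]
end

section
/- Let d be even, d = 2m with m ≥ 1. Let λ ∈ [0,1] and let (l_N) be a sequence of positive integers with l_N < N and l_N/N → λ as N → ∞. Then (d!/N^{d-1})·C(l_N - 1, m-1)·C(N - l_N, m) converges to (1/B(m, m+1))·λ^{m-1}(1-λ)^m, where B is the Euler beta function. -/
open Filter Topology Finset

lemma cast_descFactorial_real (n k : ℕ) :
    ((n.descFactorial k : ℕ) : ℝ) = ∏ i ∈ Finset.range k, ((n : ℝ) - i) := by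
  rcases le_or_gt k n with h | h
  · rw [Nat.descFactorial_eq_prod_range, Nat.cast_prod]
    refine Finset.prod_congr rfl fun i hi => ?_
    rw [Nat.cast_sub (le_trans (Finset.mem_range.mp hi).le h)]
  · rw [Nat.descFactorial_eq_zero_iff_lt.mpr h, Nat.cast_zero]
    symm
    apply Finset.prod_eq_zero (Finset.mem_range.mpr h)
    simp

lemma cast_choose_real (n k : ℕ) :
    ((n.choose k : ℕ) : ℝ) = (∏ i ∈ Finset.range k, ((n : ℝ) - i)) / k.factorial := by
  rw [← cast_descFactorial_real, Nat.descFactorial_eq_factorial_mul_choose]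
  push_cast
  field_simp

theorem stmt_3 (m : ℕ) (hm : 1 ≤ m) (lam : ℝ) (hlam : lam ∈ Set.Icc (0:ℝ) 1)
    (l : ℕ → ℕ) (hl : ∀ N, 2 ≤ N → 0 < l N ∧ l N < N)
    (hlim : Tendsto (fun N : ℕ => (l N : ℝ) / N) atTop (𝓝 lam)) :
    Tendsto
      (fun N : ℕ =>
        ((2 * m).factorial : ℝ) / (N : ℝ) ^ (2 * m - 1) *
          ((l N - 1).choose (m - 1) : ℝ) * ((N - l N).choose m : ℝ))
      atTop
      (𝓝 (((2 * m).factorial : ℝ) / ((m - 1).factorial * m.factorial) *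
        lam ^ (m - 1) * (1 - lam) ^ m)) := by
  set C : ℝ := ((2 * m).factorial : ℝ) / ((m - 1).factorial * m.factorial) with hC
  -- limits of the two products
  have h1 : Tendsto (fun N : ℕ => ∏ i ∈ Finset.range (m - 1), (((l N : ℝ) - 1 - i) / N))
      atTop (𝓝 (lam ^ (m - 1))) := by
    have := tendsto_finset_prod (f := fun (i : ℕ) (N : ℕ) => ((l N : ℝ) - 1 - i) / N)
      (a := fun _ => lam) (x := atTop) (Finset.range (m - 1)) (fun i _ => ?_)
    · simpa using this
    · have h : Tendsto (fun N : ℕ => (l N : ℝ) / N - (1 + (i : ℝ)) / N) atTop (𝓝 (lam - 0)) :=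
        hlim.sub (tendsto_const_div_atTop_nhds_zero_nat (1 + (i : ℝ)))
      rw [sub_zero] at h
      refine h.congr fun N => ?_
      show (l N : ℝ) / N - (1 + (i : ℝ)) / N = ((l N : ℝ) - 1 - i) / N
      rw [sub_div, sub_div, add_div]
      ring
  have h2 : Tendsto (fun N : ℕ => ∏ i ∈ Finset.range m, (((N : ℝ) - l N - i) / N))
      atTop (𝓝 ((1 - lam) ^ m)) := by
    have := tendsto_finset_prod (f := fun (i : ℕ) (N : ℕ) => ((N : ℝ) - l N - i) / N)
      (a := fun _ => 1 - lam) (x := atTop) (Finset.range m) (fun i _ => ?_)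
    · simpa using this
    · have h : Tendsto (fun N : ℕ => 1 - (l N : ℝ) / N - (i : ℝ) / N) atTop (𝓝 (1 - lam - 0)) :=
        (tendsto_const_nhds.sub hlim).sub (tendsto_const_div_atTop_nhds_zero_nat (i : ℝ))
      rw [sub_zero] at h
      refine h.congr' ?_
      filter_upwards [eventually_ge_atTop 1] with N hN
      have hN0 : (N : ℝ) ≠ 0 := by positivity
      field_simp
  have hF : Tendsto (fun N : ℕ => C * (∏ i ∈ Finset.range (m - 1), (((l N : ℝ) - 1 - i) / N)) *
      (∏ i ∈ Finset.range m, (((N : ℝ) - l N - i) / N))) atTop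
      (𝓝 (C * lam ^ (m - 1) * (1 - lam) ^ m)) :=
    (tendsto_const_nhds.mul h1).mul h2
  refine hF.congr' ?_
  filter_upwards [eventually_ge_atTop 2] with N hN
  obtain ⟨ha, hb⟩ := hl N hN
  have hN0 : (N : ℝ) ≠ 0 := by positivity
  have hc1 : ((l N - 1 : ℕ) : ℝ) = (l N : ℝ) - 1 := by
    rw [Nat.cast_sub ha]; norm_num
  have hc2 : ((N - l N : ℕ) : ℝ) = (N : ℝ) - l N := Nat.cast_sub hb.le
  rw [cast_choose_real, cast_choose_real, hc1, hc2]
  rw [Finset.prod_div_distrib, Finset.prod_div_distrib, Finset.prod_const, Finset.prod_const,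
    Finset.card_range, Finset.card_range]
  have hpow : (N : ℝ) ^ (m - 1) * (N : ℝ) ^ m = (N : ℝ) ^ (2 * m - 1) := by
    rw [← pow_add]
    congr 1
    omega
  have hf1 : ((m - 1).factorial : ℝ) ≠ 0 := by positivity
  have hf2 : (m.factorial : ℝ) ≠ 0 := by positivity
  rw [hC, ← hpow]
  field_simp
end

section
/- For every even d = 2m ≥ 2 and every l ∈ [0,1], the (d-1)-dimensional volume of the polytope D_d(l) (the projection onto the hyperplane x_d = 0 of {(x_1,...,x_d) : 1 ≥ x_1 ≥ x_2 ≥ ... ≥ x_d ≥ 0, Σ_{j=1}^d (-1)^{j-1} x_j = l}) equals (1/d!)·(1/B(m, m+1))·l^{m-1}(1-l)^m. -/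
open MeasureTheory

open Finset

set_option maxHeartbeats 1000000

/-- `Dset d l` is the orthogonal projection onto the hyperplane `x_d = 0`
(i.e. onto the first `d - 1` coordinates) of the polytope
`{x ∈ ℝ^d : 1 ≥ x₁ ≥ x₂ ≥ … ≥ x_d ≥ 0, ∑ (-1)^(j-1) x_j = l}`. -/
def Dset (d : ℕ) (l : ℝ) : Set (Fin (d - 1) → ℝ) :=
  {y | ∃ x : Fin d → ℝ, Antitone x ∧ (∀ j, 0 ≤ x j ∧ x j ≤ 1) ∧
    (∑ j : Fin d, (-1 : ℝ) ^ (j : ℕ) * x j) = l ∧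
    ∀ i : Fin (d - 1), y i = x (Fin.castLE (Nat.sub_le d 1) i)}


theorem measurableSet_simplex {ι : Type*} [Fintype ι] (t : ℝ) :
    MeasurableSet {x : ι → ℝ | (∀ i, 0 ≤ x i) ∧ ∑ i, x i ≤ t} := by
  have : {x : ι → ℝ | (∀ i, 0 ≤ x i) ∧ ∑ i, x i ≤ t} =
      (⋂ i, {x | 0 ≤ x i}) ∩ {x | ∑ i, x i ≤ t} := by
    ext x; simp [Set.mem_iInter]
  rw [this]
  exact (MeasurableSet.iInter fun i =>
      measurableSet_le measurable_const (measurable_pi_apply i)).inter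
    (measurableSet_le (Finset.measurable_sum _ fun i _ => measurable_pi_apply i) measurable_const)

theorem vol_simplex_fin : ∀ (n : ℕ) (t : ℝ), 0 ≤ t →
    volume {x : Fin n → ℝ | (∀ i, 0 ≤ x i) ∧ ∑ i, x i ≤ t} =
      ENNReal.ofReal (t ^ n / n.factorial) := by
  intro n
  induction n with
  | zero =>
    intro t ht
    have : {x : Fin 0 → ℝ | (∀ i, 0 ≤ x i) ∧ ∑ i, x i ≤ t} = Set.univ := by
      ext x; simp [ht]
    rw [this, MeasureTheory.volume_pi, Measure.pi_univ]
    simp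
  | succ n ih =>
    intro t ht
    set S := {x : Fin (n+1) → ℝ | (∀ i, 0 ≤ x i) ∧ ∑ i, x i ≤ t} with hS
    let T : Set (ℝ × (Fin n → ℝ)) :=
      (Prod.fst ⁻¹' Set.Ici (0:ℝ) ∩
        ⋂ i : Fin n, (fun p : ℝ × (Fin n → ℝ) => p.2 i) ⁻¹' Set.Ici (0:ℝ)) ∩
        (fun p : ℝ × (Fin n → ℝ) => p.1 + ∑ i, p.2 i) ⁻¹' Set.Iic t
    have hmemT : ∀ p : ℝ × (Fin n → ℝ),
        p ∈ T ↔ (0 ≤ p.1 ∧ ∀ i, 0 ≤ p.2 i) ∧ p.1 + ∑ i, p.2 i ≤ t := by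
      intro p
      simp only [T, Set.mem_inter_iff, Set.mem_iInter, Set.mem_preimage, Set.mem_Ici,
        Set.mem_Iic, and_assoc]
    have hTm : MeasurableSet T := by
      refine ((measurable_fst measurableSet_Ici).inter
        (MeasurableSet.iInter fun i =>
          ((measurable_pi_apply i).comp measurable_snd) measurableSet_Ici)).inter
        ((measurable_fst.add (Finset.measurable_sum Finset.univ
          fun i _ => by exact ((measurable_pi_apply i).comp measurable_snd))) measurableSet_Iic)
    have e := MeasureTheory.volume_preserving_piFinSuccAbove (fun _ : Fin (n+1) => ℝ) 0
    have happ : ∀ x : Fin (n+1) → ℝ,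
        (MeasurableEquiv.piFinSuccAbove (fun _ : Fin (n+1) => ℝ) 0) x
          = (x 0, fun i => x i.succ) := by
      intro x
      simp only [MeasurableEquiv.piFinSuccAbove, MeasurableEquiv.coe_mk,
        Fin.insertNthEquiv_symm_apply, Fin.removeNth_zero]
      exact Prod.ext rfl rfl
    have hpre : S = (MeasurableEquiv.piFinSuccAbove (fun _ : Fin (n+1) => ℝ) 0) ⁻¹' T := by
      ext x
      rw [Set.mem_preimage, hmemT, happ, hS]
      simp only [Set.mem_setOf_eq]
      constructor
      · rintro ⟨h0, hs⟩
        exact ⟨⟨h0 0, fun i => h0 _⟩, by rwa [← Fin.sum_univ_succ (fun i => x i)]⟩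
      · rintro ⟨⟨h0, hr⟩, hs⟩
        refine ⟨fun i => ?_, by rwa [Fin.sum_univ_succ]⟩
        rcases Fin.eq_zero_or_eq_succ i with rfl | ⟨j, rfl⟩
        · exact h0
        · exact hr j
    rw [hpre, e.measure_preimage hTm.nullMeasurableSet]
    rw [Measure.volume_eq_prod, Measure.prod_apply hTm]
    have hslice : ∀ a : ℝ, volume (Prod.mk a ⁻¹' T) =
        Set.indicator (Set.Icc 0 t) (fun a => ENNReal.ofReal ((t-a)^n / n.factorial)) a := by
      intro a
      by_cases ha : a ∈ Set.Icc (0:ℝ) t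
      · rw [Set.indicator_of_mem ha]
        have : Prod.mk a ⁻¹' T = {y : Fin n → ℝ | (∀ i, 0 ≤ y i) ∧ ∑ i, y i ≤ t - a} := by
          ext y
          rw [Set.mem_preimage, hmemT]
          simp only [Set.mem_setOf_eq, ha.1, true_and]
          constructor
          · rintro ⟨h1, h2⟩; exact ⟨h1, by linarith⟩
          · rintro ⟨h1, h2⟩; exact ⟨h1, by linarith⟩
        rw [this, ih _ (by linarith [ha.2])]
      · rw [Set.indicator_of_notMem ha]
        have : Prod.mk a ⁻¹' T = ∅ := by
          ext y
          rw [Set.mem_preimage, hmemT]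
          simp only [Set.mem_empty_iff_false, iff_false]
          rintro ⟨⟨h1, h2⟩, h3⟩
          apply ha
          have : 0 ≤ ∑ i, y i := Finset.sum_nonneg fun i _ => h2 i
          exact ⟨h1, by linarith⟩
        simp [this]
    simp_rw [hslice]
    rw [lintegral_indicator measurableSet_Icc]
    have hint : ∫⁻ a in Set.Icc (0:ℝ) t, ENNReal.ofReal ((t-a)^n / n.factorial) =
        ENNReal.ofReal (∫ a in Set.Icc (0:ℝ) t, (t-a)^n / n.factorial) := by
      rw [← MeasureTheory.ofReal_integral_eq_lintegral_ofReal]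
      · exact ((continuous_const.sub continuous_id).pow n |>.div_const _).integrableOn_Icc
      · filter_upwards [ae_restrict_mem measurableSet_Icc] with a ha
        have : 0 ≤ t - a := by linarith [ha.2]
        positivity
    rw [hint]
    congr 1
    rw [MeasureTheory.integral_Icc_eq_integral_Ioc, ← intervalIntegral.integral_of_le ht]
    rw [show (∫ a in (0:ℝ)..t, (t-a)^n / (n.factorial:ℝ))
        = ∫ x in (t-t)..(t-(0:ℝ)), x^n / (n.factorial:ℝ) from
      intervalIntegral.integral_comp_sub_left (fun b => b ^ n / (n.factorial:ℝ)) t]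
    rw [sub_self, sub_zero]
    rw [intervalIntegral.integral_div, integral_pow]
    rw [Nat.factorial_succ]
    push_cast
    rw [zero_pow (by omega), sub_zero]
    have h1 : (0:ℝ) < n.factorial := by positivity
    field_simp

theorem vol_simplex (ι : Type*) [Fintype ι] (t : ℝ) (ht : 0 ≤ t) :
    volume {x : ι → ℝ | (∀ i, 0 ≤ x i) ∧ ∑ i, x i ≤ t} =
      ENNReal.ofReal (t ^ (Fintype.card ι) / (Fintype.card ι).factorial) := by
  classical
  let e : Fin (Fintype.card ι) ≃ ι := (Fintype.equivFin ι).symm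
  have mp := MeasureTheory.volume_measurePreserving_piCongrLeft (fun _ : ι => ℝ) e
  rw [← mp.measure_preimage (measurableSet_simplex t).nullMeasurableSet]
  have hpre : (MeasurableEquiv.piCongrLeft (fun _ : ι => ℝ) e) ⁻¹'
      {x : ι → ℝ | (∀ i, 0 ≤ x i) ∧ ∑ i, x i ≤ t} =
      {x : Fin (Fintype.card ι) → ℝ | (∀ i, 0 ≤ x i) ∧ ∑ i, x i ≤ t} := by
    ext x
    have happ : ∀ k, (MeasurableEquiv.piCongrLeft (fun _ : ι => ℝ) e) x (e k) = x k := by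
      intro k
      simp [MeasurableEquiv.piCongrLeft, Equiv.piCongrLeft_apply_apply]
    simp only [Set.mem_preimage, Set.mem_setOf_eq]
    constructor
    · rintro ⟨h1, h2⟩
      refine ⟨fun k => by rw [← happ k]; exact h1 _, ?_⟩
      calc ∑ k, x k = ∑ k, (MeasurableEquiv.piCongrLeft (fun _ : ι => ℝ) e) x (e k) := by
            exact (Finset.sum_congr rfl fun k _ => (happ k).symm)
        _ = ∑ i, (MeasurableEquiv.piCongrLeft (fun _ : ι => ℝ) e) x i := Equiv.sum_comp e _
        _ ≤ t := h2
    · rintro ⟨h1, h2⟩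
      refine ⟨fun i => ?_, ?_⟩
      · rw [← e.apply_symm_apply i, happ]; exact h1 _
      · calc ∑ i, (MeasurableEquiv.piCongrLeft (fun _ : ι => ℝ) e) x i
            = ∑ k, (MeasurableEquiv.piCongrLeft (fun _ : ι => ℝ) e) x (e k) :=
              (Equiv.sum_comp e _).symm
        _ = ∑ k, x k := Finset.sum_congr rfl fun k _ => happ k
        _ ≤ t := h2
  rw [hpre, vol_simplex_fin _ t ht]

theorem fin_sum_filter {n : ℕ} (z : Fin n → ℝ) (p : ℕ → Prop) [DecidablePred p] :
    ∑ i ∈ univ.filter (fun i : Fin n => p (i:ℕ)), z i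
      = ∑ k ∈ (range n).filter p, (fun k => if h : k < n then z ⟨k,h⟩ else 0) k := by
  rw [Finset.sum_filter, Finset.sum_filter]
  rw [← Fin.sum_univ_eq_sum_range
    (fun k => if p k then (if h : k < n then z ⟨k,h⟩ else 0) else 0) n]
  refine Finset.sum_congr rfl fun i _ => ?_
  by_cases h : p (i:ℕ)
  · simp [h, i.2]
  · simp [h]

theorem fin_sum_range {n : ℕ} (z : Fin n → ℝ) :
    ∑ i, z i = ∑ k ∈ range n, (if h : k < n then z ⟨k,h⟩ else 0) := by
  rw [← Fin.sum_univ_eq_sum_range (fun k => if h : k < n then z ⟨k,h⟩ else 0) n]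
  exact Finset.sum_congr rfl fun i _ => by simp [i.2]

theorem prefix_sum (z x : ℕ → ℝ) (h0 : z 0 = 1 - x 0)
    (hs : ∀ k, z (k+1) = x k - x (k+1)) :
    ∀ j, ∑ i ∈ range (j+1), z i = 1 - x j := by
  intro j
  induction j with
  | zero => simpa using h0
  | succ j ih => rw [Finset.sum_range_succ, ih, hs j]; ring

theorem alt_odd (z x : ℕ → ℝ) (hs : ∀ k, z (k+1) = x k - x (k+1)) :
    ∀ N, ∑ j ∈ range (2*N), (-1:ℝ)^j * x j
      = ∑ i ∈ (range (2*N)).filter (fun i => i % 2 = 1), z i := by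
  intro N
  induction N with
  | zero => simp
  | succ N ih =>
    have h1 : 2*(N+1) = (2*N+1)+1 := by ring
    rw [h1, Finset.sum_range_succ, Finset.sum_range_succ, ih]
    rw [Finset.range_add_one, Finset.filter_insert, if_pos (by omega)]
    rw [Finset.range_add_one, Finset.filter_insert, if_neg (by omega)]
    rw [Finset.sum_insert (by simp)]
    have e1 : (-1:ℝ)^(2*N) = 1 := by rw [pow_mul]; norm_num
    have e2 : (-1:ℝ)^(2*N+1) = -1 := by rw [pow_succ, e1]; ring
    rw [e1, e2, hs (2*N)]
    ring

theorem alt_phi (z : ℕ → ℝ) :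
    ∀ N, ∑ j ∈ range (2*N+1), (-1:ℝ)^j * (1 - ∑ i ∈ range (j+1), z i)
      = 1 - ∑ i ∈ (range (2*N+1)).filter (fun i => i % 2 = 0), z i := by
  intro N
  induction N with
  | zero =>
    simp only [Nat.mul_zero, Nat.zero_add, Finset.sum_range_one, Finset.range_one, pow_zero,
      one_mul]
    rw [Finset.filter_singleton, if_pos (by omega), Finset.sum_singleton]
    simp
  | succ N ih =>
    have h1 : 2*(N+1)+1 = ((2*N+1)+1)+1 := by ring
    rw [h1]
    have hR : ∑ i ∈ (range (((2*N+1)+1)+1)).filter (fun i => i % 2 = 0), z i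
        = ∑ i ∈ (range (2*N+1)).filter (fun i => i % 2 = 0), z i + z ((2*N+1)+1) := by
      rw [Finset.range_add_one, Finset.filter_insert, if_pos (by omega),
        Finset.sum_insert (by simp), Finset.range_add_one, Finset.filter_insert,
        if_neg (by omega)]
      ring
    rw [hR, Finset.sum_range_succ, Finset.sum_range_succ, ih]
    have e1 : (-1:ℝ)^(2*N+1) = -1 := by
      rw [pow_succ, pow_mul]; norm_num
    have e2 : (-1:ℝ)^((2*N+1)+1) = 1 := by rw [pow_succ, e1]; ring
    rw [e1, e2]
    rw [Finset.sum_range_succ (fun i => z i) ((2*N+1)+1)]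
    ring

theorem sum_subtype_filter (n : ℕ) (q : Fin n → Prop) [DecidablePred q] (z : Fin n → ℝ) :
    ∑ i : {i : Fin n // q i}, z i.1 = ∑ i ∈ univ.filter q, z i :=
  (Finset.sum_subtype (univ.filter q) (fun x => by simp) z).symm

theorem card_odd (m : ℕ) (hm : 1 ≤ m) :
    Fintype.card {i : Fin (2*m-1) // (i:ℕ) % 2 = 1} = m - 1 := by
  have e : Fin (m-1) ≃ {i : Fin (2*m-1) // (i:ℕ) % 2 = 1} :=
    { toFun := fun k => ⟨⟨2*(k:ℕ)+1, by have := k.2; omega⟩,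
        show (2*(k:ℕ)+1) % 2 = 1 by omega⟩
      invFun := fun s => ⟨((s.1:ℕ)-1)/2,
        by have := s.1.2; have : ((s.1:ℕ)) % 2 = 1 := s.2; omega⟩
      left_inv := fun k => by
        apply Fin.ext; show (2*(k:ℕ)+1-1)/2 = (k:ℕ); omega
      right_inv := fun s => by
        apply Subtype.ext; apply Fin.ext
        show 2*(((s.1:ℕ)-1)/2)+1 = (s.1:ℕ)
        have : ((s.1:ℕ)) % 2 = 1 := s.2; omega }
  rw [← Fintype.card_congr e, Fintype.card_fin]

theorem card_even (m : ℕ) (hm : 1 ≤ m) :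
    Fintype.card {i : Fin (2*m-1) // ¬ ((i:ℕ) % 2 = 1)} = m := by
  have e : Fin m ≃ {i : Fin (2*m-1) // ¬ ((i:ℕ) % 2 = 1)} :=
    { toFun := fun k => ⟨⟨2*(k:ℕ), by have := k.2; omega⟩,
        show ¬ ((2*(k:ℕ)) % 2 = 1) by omega⟩
      invFun := fun s => ⟨((s.1:ℕ))/2,
        by have := s.1.2; have : ¬ ((s.1:ℕ)) % 2 = 1 := s.2; omega⟩
      left_inv := fun k => by
        apply Fin.ext; show (2*(k:ℕ))/2 = (k:ℕ); omega
      right_inv := fun s => by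
        apply Subtype.ext; apply Fin.ext
        show 2*(((s.1:ℕ))/2) = (s.1:ℕ)
        have : ¬ ((s.1:ℕ)) % 2 = 1 := s.2; omega }
  rw [← Fintype.card_congr e, Fintype.card_fin]

theorem vol_E (m : ℕ) (hm : 1 ≤ m) (l : ℝ) (hl : l ∈ Set.Icc (0:ℝ) 1) :
    volume ((MeasurableEquiv.piEquivPiSubtypeProd (fun _ : Fin (2*m-1) => ℝ)
        (fun i => (i:ℕ) % 2 = 1)) ⁻¹'
      (({x : {i : Fin (2*m-1) // (i:ℕ) % 2 = 1} → ℝ | (∀ i, 0 ≤ x i) ∧ ∑ i, x i ≤ l}) ×ˢ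
       ({x : {i : Fin (2*m-1) // ¬ ((i:ℕ) % 2 = 1)} → ℝ | (∀ i, 0 ≤ x i) ∧ ∑ i, x i ≤ 1 - l})))
    = ENNReal.ofReal (l ^ (m-1) / (m-1).factorial) *
      ENNReal.ofReal ((1-l) ^ m / m.factorial) := by
  have mp := MeasureTheory.volume_preserving_piEquivPiSubtypeProd
    (fun _ : Fin (2*m-1) => ℝ) (fun i => (i:ℕ) % 2 = 1)
  rw [mp.measure_preimage (((measurableSet_simplex l).prod
    (measurableSet_simplex (1-l))).nullMeasurableSet)]
  rw [Measure.volume_eq_prod, Measure.prod_prod]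
  rw [vol_simplex _ l hl.1, vol_simplex _ (1-l) (by linarith [hl.2])]
  rw [card_odd m hm, card_even m hm]

noncomputable def Phi (n : ℕ) : (Fin n → ℝ) → (Fin n → ℝ) :=
  fun z j => 1 - ∑ i ∈ univ.filter (fun i : Fin n => (i:ℕ) ≤ (j:ℕ)), z i

theorem vol_image_Phi (n : ℕ) (E : Set (Fin n → ℝ)) :
    volume (Phi n '' E) = volume E := by
  classical
  set M : Matrix (Fin n) (Fin n) ℝ :=
    Matrix.of (fun j i : Fin n => if (i:ℕ) ≤ (j:ℕ) then (-1:ℝ) else 0) with hM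
  have hLapp : ∀ z j, Matrix.toLin' M z j
      = -∑ i ∈ univ.filter (fun i : Fin n => (i:ℕ) ≤ (j:ℕ)), z i := by
    intro z j
    rw [Matrix.toLin'_apply, Matrix.mulVec, dotProduct]
    calc ∑ i, M j i * z i = ∑ i : Fin n, (if (i:ℕ) ≤ (j:ℕ) then -z i else 0) := by
          refine Finset.sum_congr rfl fun i _ => ?_
          by_cases h : (i:ℕ) ≤ (j:ℕ)
          · simp only [hM, Matrix.of_apply, if_pos h]; ring
          · simp only [hM, Matrix.of_apply, if_neg h]; ring
      _ = ∑ i ∈ univ.filter (fun i : Fin n => (i:ℕ) ≤ (j:ℕ)), -z i :=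
          (Finset.sum_filter _ _).symm
      _ = -∑ i ∈ univ.filter (fun i : Fin n => (i:ℕ) ≤ (j:ℕ)), z i := by
          rw [Finset.sum_neg_distrib]
  have hdet : LinearMap.det (Matrix.toLin' M) = (-1)^n := by
    rw [LinearMap.det_toLin']
    rw [Matrix.det_of_lowerTriangular M (by
      intro i j hij
      have hlt : i < j := by simpa using hij
      have : ¬ ((j:ℕ) ≤ (i:ℕ)) := by
        rw [Fin.lt_def] at hlt; omega
      simp only [hM, Matrix.of_apply, if_neg this])]
    simp only [hM, Matrix.of_apply, le_refl, if_pos]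
    rw [Finset.prod_const]
    simp
  have hcomp : Phi n = (fun y : Fin n → ℝ => (fun _ => (1:ℝ)) + y) ∘ (Matrix.toLin' M) := by
    funext z j
    simp only [Function.comp_apply, Pi.add_apply, Phi, hLapp]
    ring
  rw [hcomp, Set.image_comp]
  have himg : (fun y : Fin n → ℝ => (fun _ => (1:ℝ)) + y) '' ((Matrix.toLin' M) '' E)
      = (fun y : Fin n → ℝ => (fun _ => (-1:ℝ)) + y) ⁻¹' ((Matrix.toLin' M) '' E) := by
    ext y
    simp only [Set.mem_image, Set.mem_preimage]
    constructor
    · rintro ⟨w, hw, rfl⟩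
      have heq : (fun _ : Fin n => (-1:ℝ)) + ((fun _ => (1:ℝ)) + w) = w := by
        funext j; simp
      rw [heq]; exact hw
    · intro h
      refine ⟨(fun _ : Fin n => (-1:ℝ)) + y, h, ?_⟩
      funext j; simp
  rw [himg, measure_preimage_add volume _ _, Measure.addHaar_image_linearMap volume _ E, hdet]
  have : |((-1:ℝ))^n| = 1 := by
    rw [abs_pow, abs_neg, abs_one, one_pow]
  rw [this]
  simp

theorem phi_apply_eq {n : ℕ} (z : Fin n → ℝ) (i : Fin n) :
    Phi n z i = 1 - ∑ k ∈ range ((i:ℕ)+1),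
      (fun k => if h : k < n then z ⟨k,h⟩ else 0) k := by
  unfold Phi
  rw [fin_sum_filter z (fun k => k ≤ (i:ℕ))]
  congr 1
  refine Finset.sum_congr ?_ (fun k _ => rfl)
  ext k
  simp only [mem_filter, mem_range]
  have := i.2
  omega

theorem dset_eq (m : ℕ) (hm : 1 ≤ m) (l : ℝ) (hl : l ∈ Set.Icc (0:ℝ) 1) :
    Dset (2*m) l = Phi (2*m-1) ''
      {z : Fin (2*m-1) → ℝ | (∀ i, 0 ≤ z i) ∧
        ∑ i ∈ univ.filter (fun i : Fin (2*m-1) => (i:ℕ) % 2 = 1), z i ≤ l ∧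
        ∑ i ∈ univ.filter (fun i : Fin (2*m-1) => (i:ℕ) % 2 = 0), z i ≤ 1 - l} := by
  classical
  have h2m1 : 2*m - 1 < 2*m := by omega
  ext y
  constructor
  · rintro ⟨x, hanti, hbd, hsum, hy⟩
    set xN : ℕ → ℝ := fun k => if h : k < 2*m then x ⟨k,h⟩ else 0 with hxN
    set zN : ℕ → ℝ := fun k => if k = 0 then 1 - xN 0 else xN (k-1) - xN k with hzN
    have hxval : ∀ (k : ℕ) (h : k < 2*m), xN k = x ⟨k,h⟩ := fun k h => dif_pos h
    have hz0 : zN 0 = 1 - xN 0 := if_pos rfl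
    have hzs : ∀ k, zN (k+1) = xN k - xN (k+1) := by
      intro k
      simp only [hzN, Nat.succ_ne_zero, if_false, Nat.add_sub_cancel]
    have hxmono : ∀ k, xN (k+1) ≤ xN k := by
      intro k
      by_cases h1 : k+1 < 2*m
      · rw [hxval (k+1) h1, hxval k (by omega)]
        exact hanti (by rw [Fin.mk_le_mk]; omega)
      · by_cases h2 : k < 2*m
        · rw [hxval k h2]
          have : xN (k+1) = 0 := dif_neg (by omega)
          rw [this]
          exact (hbd ⟨k, h2⟩).1
        · have e1 : xN (k+1) = 0 := dif_neg (by omega)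
          have e2 : xN k = 0 := dif_neg (by omega)
          rw [e1, e2]
    have hznn : ∀ k, 0 ≤ zN k := by
      intro k
      cases k with
      | zero =>
        rw [hz0, hxval 0 (by omega)]
        linarith [(hbd ⟨0, by omega⟩).2]
      | succ k =>
        rw [hzs k]
        linarith [hxmono k]
    -- alternating sum over range
    have hsumN : ∑ k ∈ range (2*m), (-1:ℝ)^k * xN k = l := by
      rw [← Fin.sum_univ_eq_sum_range (fun k => (-1:ℝ)^k * xN k) (2*m)]
      rw [← hsum]
      refine Finset.sum_congr rfl fun j _ => ?_
      rw [hxval (j:ℕ) j.2]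
    have hodd2m : ∑ k ∈ (range (2*m)).filter (fun k => k % 2 = 1), zN k = l := by
      rw [← alt_odd zN xN hzs m, hsumN]
    have hoddsplit : ∑ k ∈ (range (2*m)).filter (fun k => k % 2 = 1), zN k
        = zN (2*m-1) + ∑ k ∈ (range (2*m-1)).filter (fun k => k % 2 = 1), zN k := by
      have h1 : 2*m = (2*m-1)+1 := by omega
      conv_lhs => rw [h1, Finset.range_add_one]
      rw [Finset.filter_insert, if_pos (by omega), Finset.sum_insert (by simp)]
    have hoddle : ∑ k ∈ (range (2*m-1)).filter (fun k => k % 2 = 1), zN k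
        = l - zN (2*m-1) := by
      rw [hoddsplit] at hodd2m; linarith
    have htot : ∑ k ∈ range (2*m-1), zN k = 1 - xN (2*m-2) := by
      have h1 : 2*m-1 = (2*m-2)+1 := by omega
      conv_lhs => rw [h1]
      rw [prefix_sum zN xN hz0 hzs (2*m-2)]
    have hfc : (range (2*m-1)).filter (fun k => ¬ (k % 2 = 1))
        = (range (2*m-1)).filter (fun k => k % 2 = 0) :=
      Finset.filter_congr (fun k _ => by omega)
    have hsplit := Finset.sum_filter_add_sum_filter_not (range (2*m-1))
      (fun k => k % 2 = 1) zN
    rw [hfc] at hsplit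
    refine ⟨fun i => zN (i:ℕ), ⟨fun i => hznn _, ?_, ?_⟩, ?_⟩
    · rw [fin_sum_filter (fun i : Fin (2*m-1) => zN (i:ℕ)) (fun k => k % 2 = 1)]
      have : ∑ k ∈ (range (2*m-1)).filter (fun k => k % 2 = 1),
          (fun k => if h : k < 2*m-1 then zN k else 0) k
          = ∑ k ∈ (range (2*m-1)).filter (fun k => k % 2 = 1), zN k := by
        refine Finset.sum_congr rfl fun k hk => ?_
        rw [mem_filter, mem_range] at hk
        exact dif_pos hk.1
      rw [this, hoddle]
      linarith [hznn (2*m-1)]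
    · rw [fin_sum_filter (fun i : Fin (2*m-1) => zN (i:ℕ)) (fun k => k % 2 = 0)]
      have : ∑ k ∈ (range (2*m-1)).filter (fun k => k % 2 = 0),
          (fun k => if h : k < 2*m-1 then zN k else 0) k
          = ∑ k ∈ (range (2*m-1)).filter (fun k => k % 2 = 0), zN k := by
        refine Finset.sum_congr rfl fun k hk => ?_
        rw [mem_filter, mem_range] at hk
        exact dif_pos hk.1
      rw [this]
      have hz2m1 : zN (2*m-1) = xN (2*m-2) - xN (2*m-1) := by
        have h1 : 2*m-1 = (2*m-2)+1 := by omega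
        rw [h1, hzs (2*m-2)]
      have hx2m1 : 0 ≤ xN (2*m-1) := by
        rw [hxval (2*m-1) (by omega)]
        exact (hbd _).1
      linarith [hsplit, hoddle, htot, hz2m1, hx2m1]
    · funext i
      rw [phi_apply_eq, hy i]
      have hconv : ∑ k ∈ range ((i:ℕ)+1),
          (fun k => if h : k < 2*m-1 then zN k else 0) k
          = ∑ k ∈ range ((i:ℕ)+1), zN k := by
        refine Finset.sum_congr rfl fun k hk => ?_
        rw [mem_range] at hk
        have := i.2
        exact dif_pos (by omega)
      rw [hconv, prefix_sum zN xN hz0 hzs (i:ℕ)]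
      rw [hxval (i:ℕ) (by have := i.2; omega)]
      have hcast : (Fin.castLE (Nat.sub_le (2*m) 1) i) = ⟨(i:ℕ), by have := i.2; omega⟩ := rfl
      rw [hcast]
      ring
  · rintro ⟨z, ⟨hznn, hzodd, hzeven⟩, rfl⟩
    set zext : ℕ → ℝ := fun k => if h : k < 2*m-1 then z ⟨k,h⟩ else 0 with hzext
    have hznn' : ∀ k, 0 ≤ zext k := by
      intro k
      by_cases h : k < 2*m-1
      · simp only [hzext]; rw [dif_pos h]; exact hznn _
      · simp only [hzext]; rw [dif_neg h]
    have hzoddr : ∑ k ∈ (range (2*m-1)).filter (fun k => k % 2 = 1), zext k ≤ l := by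
      rw [fin_sum_filter z (fun k => k % 2 = 1)] at hzodd
      exact hzodd
    have hzevenr : ∑ k ∈ (range (2*m-1)).filter (fun k => k % 2 = 0), zext k ≤ 1 - l := by
      rw [fin_sum_filter z (fun k => k % 2 = 0)] at hzeven
      exact hzeven
    set Sev := ∑ k ∈ (range (2*m-1)).filter (fun k => k % 2 = 0), zext k with hSev
    set xN : ℕ → ℝ := fun j =>
      if j < 2*m-1 then 1 - ∑ i ∈ range (j+1), zext i else 1 - l - Sev with hxN
    have hfc : (range (2*m-1)).filter (fun k => ¬ (k % 2 = 1))
        = (range (2*m-1)).filter (fun k => k % 2 = 0) :=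
      Finset.filter_congr (fun k _ => by omega)
    have hsplit := Finset.sum_filter_add_sum_filter_not (range (2*m-1))
      (fun k => k % 2 = 1) zext
    rw [hfc] at hsplit
    have hstep : ∀ k, xN (k+1) ≤ xN k := by
      intro k
      by_cases h1 : k+1 < 2*m-1
      · simp only [hxN]
        rw [if_pos h1, if_pos (by omega)]
        rw [Finset.sum_range_succ]
        linarith [hznn' (k+1)]
      · by_cases h2 : k+1 = 2*m-1
        · have e1 : xN (k+1) = 1 - l - Sev := by simp only [hxN]; rw [if_neg (by omega)]
          have e2 : xN k = 1 - ∑ i ∈ range (2*m-1), zext i := by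
            simp only [hxN]
            rw [if_pos (by omega)]
            have : k + 1 = 2*m-1 := h2
            rw [this]
          rw [e1, e2]
          linarith [hsplit, hzoddr]
        · have e1 : xN (k+1) = 1 - l - Sev := by simp only [hxN]; rw [if_neg (by omega)]
          have e2 : xN k = 1 - l - Sev := by simp only [hxN]; rw [if_neg (by omega)]
          rw [e1, e2]
    have hmono : Antitone xN := antitone_nat_of_succ_le hstep
    have hxlast : xN (2*m-1) = 1 - l - Sev := by simp only [hxN]; rw [if_neg (by omega)]
    have hx0 : xN 0 = 1 - zext 0 := by
      simp only [hxN]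
      rw [if_pos (by omega), Finset.sum_range_one]
    refine ⟨fun j : Fin (2*m) => xN (j:ℕ), ?_, ?_, ?_, ?_⟩
    · intro a b hab
      exact hmono (show (a:ℕ) ≤ (b:ℕ) from hab)
    · intro j
      constructor
      · show 0 ≤ xN (j:ℕ)
        have h1 : xN (2*m-1) ≤ xN (j:ℕ) := hmono (by have := j.2; omega)
        rw [hxlast] at h1
        linarith [hzevenr]
      · show xN (j:ℕ) ≤ 1
        have h1 : xN (j:ℕ) ≤ xN 0 := hmono (Nat.zero_le _)
        rw [hx0] at h1
        linarith [hznn' 0]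
    · show ∑ j : Fin (2*m), (-1:ℝ)^(j:ℕ) * xN (j:ℕ) = l
      rw [Fin.sum_univ_eq_sum_range (fun k => (-1:ℝ)^k * xN k) (2*m)]
      have h1 : 2*m = (2*m-1)+1 := by omega
      conv_lhs => rw [h1, Finset.sum_range_succ]
      have h2 : ∑ k ∈ range (2*m-1), (-1:ℝ)^k * xN k
          = ∑ k ∈ range (2*m-1), (-1:ℝ)^k * (1 - ∑ i ∈ range (k+1), zext i) := by
        refine Finset.sum_congr rfl fun k hk => ?_
        rw [mem_range] at hk
        simp only [hxN]
        rw [if_pos hk]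
      rw [h2]
      have h3 : 2*m-1 = 2*(m-1)+1 := by omega
      rw [h3, alt_phi zext (m-1), ← h3]
      have h4 : (-1:ℝ)^(2*m-1) = -1 := by
        rw [h3, pow_succ, pow_mul]
        norm_num
      rw [h4, hxlast, hSev]
      ring
    · intro i
      rw [phi_apply_eq]
      have hxi : xN (i:ℕ) = 1 - ∑ k ∈ range ((i:ℕ)+1), zext k := by
        simp only [hxN]
        rw [if_pos i.2]
      have hcast : ((Fin.castLE (Nat.sub_le (2*m) 1) i : Fin (2*m)) : ℕ) = (i:ℕ) := rfl
      show (1:ℝ) - ∑ k ∈ range ((i:ℕ)+1),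
        (fun k => if h : k < 2*m-1 then z ⟨k,h⟩ else 0) k = xN ((Fin.castLE (Nat.sub_le (2*m) 1) i : Fin (2*m)) : ℕ)
      rw [hcast, hxi]


theorem stmt_5 (m : ℕ) (hm : 1 ≤ m) (l : ℝ) (hl : l ∈ Set.Icc (0:ℝ) 1) :
    volume (Dset (2 * m) l) =
      ENNReal.ofReal
        ((1 / ((2 * m).factorial : ℝ)) *
          (((2 * m).factorial : ℝ) / ((m - 1).factorial * m.factorial)) *
          l ^ (m - 1) * (1 - l) ^ m) := by
  classical
  rw [dset_eq m hm l hl, vol_image_Phi]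
  have hE : {z : Fin (2*m-1) → ℝ | (∀ i, 0 ≤ z i) ∧
        ∑ i ∈ univ.filter (fun i : Fin (2*m-1) => (i:ℕ) % 2 = 1), z i ≤ l ∧
        ∑ i ∈ univ.filter (fun i : Fin (2*m-1) => (i:ℕ) % 2 = 0), z i ≤ 1 - l} =
      (MeasurableEquiv.piEquivPiSubtypeProd (fun _ : Fin (2*m-1) => ℝ)
        (fun i => (i:ℕ) % 2 = 1)) ⁻¹'
      (({x : {i : Fin (2*m-1) // (i:ℕ) % 2 = 1} → ℝ | (∀ i, 0 ≤ x i) ∧ ∑ i, x i ≤ l}) ×ˢ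
       ({x : {i : Fin (2*m-1) // ¬ ((i:ℕ) % 2 = 1)} → ℝ |
          (∀ i, 0 ≤ x i) ∧ ∑ i, x i ≤ 1 - l})) := by
    ext z
    have h1eq : ((MeasurableEquiv.piEquivPiSubtypeProd (fun _ : Fin (2*m-1) => ℝ)
        (fun i => (i:ℕ) % 2 = 1)) z).1 = fun i => z i.1 := rfl
    have h2eq : ((MeasurableEquiv.piEquivPiSubtypeProd (fun _ : Fin (2*m-1) => ℝ)
        (fun i => (i:ℕ) % 2 = 1)) z).2 = fun i => z i.1 := rfl
    simp only [Set.mem_setOf_eq, Set.mem_preimage, Set.mem_prod, h1eq, h2eq]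
    rw [sum_subtype_filter (2*m-1) (fun i => (i:ℕ) % 2 = 1) z,
      sum_subtype_filter (2*m-1) (fun i => ¬ ((i:ℕ) % 2 = 1)) z]
    have hfc : univ.filter (fun i : Fin (2*m-1) => ¬ ((i:ℕ) % 2 = 1))
        = univ.filter (fun i : Fin (2*m-1) => (i:ℕ) % 2 = 0) :=
      Finset.filter_congr (fun i _ => by omega)
    rw [hfc]
    constructor
    · rintro ⟨h1, h2, h3⟩
      exact ⟨⟨fun i => h1 _, h2⟩, ⟨fun i => h1 _, h3⟩⟩
    · rintro ⟨⟨h1, h2⟩, ⟨h3, h4⟩⟩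
      refine ⟨fun i => ?_, h2, h4⟩
      by_cases h : (i:ℕ) % 2 = 1
      · exact h1 ⟨i, h⟩
      · exact h3 ⟨i, h⟩
  rw [hE, vol_E m hm l hl]
  have h0l : (0:ℝ) ≤ l := hl.1
  rw [← ENNReal.ofReal_mul (by positivity)]
  congr 1
  have f1 : ((m-1).factorial : ℝ) ≠ 0 := by positivity
  have f2 : (m.factorial : ℝ) ≠ 0 := by positivity
  have f3 : (((2*m).factorial) : ℝ) ≠ 0 := by positivity
  field_simp
end

section
/- For every odd d = 2m+1 ≥ 1 and every l ∈ [0,1], the (d-1)-dimensional volume of D_d(l), the projection onto {x_d = 0} of {(x_1,...,x_d) : 1 ≥ x_1 ≥ ... ≥ x_d ≥ 0, Σ_{j=1}^d (-1)^{j-1} x_j = l}, equals (1/d!)·(1/B(m+1,m+1))·l^m(1-l)^m, where B(m+1,m+1) = (m!)^2/(2m+1)!. -/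
open MeasureTheory

lemma simplex_measurable (m : ℕ) (c : ℝ) :
    MeasurableSet {u : Fin m → ℝ | (∀ i, 0 ≤ u i) ∧ ∑ i, u i ≤ c} := by
  have : {u : Fin m → ℝ | (∀ i, 0 ≤ u i) ∧ ∑ i, u i ≤ c}
      = (⋂ i, {u : Fin m → ℝ | 0 ≤ u i}) ∩ {u | ∑ i, u i ≤ c} := by
    ext u; simp [Set.mem_iInter]
  rw [this]
  exact (MeasurableSet.iInter fun i =>
      measurableSet_le measurable_const (measurable_pi_apply i)).inter
    (measurableSet_le (Finset.measurable_sum _ fun i _ => measurable_pi_apply i) measurable_const)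

lemma simplex_volume : ∀ (m : ℕ) (c : ℝ), 0 ≤ c →
    volume {u : Fin m → ℝ | (∀ i, 0 ≤ u i) ∧ ∑ i, u i ≤ c}
      = ENNReal.ofReal (c ^ m / m.factorial) := by
  intro m
  induction m with
  | zero =>
    intro c hc
    have h1 : {u : Fin 0 → ℝ | (∀ i, 0 ≤ u i) ∧ ∑ i, u i ≤ c} = Set.univ := by
      ext u; simp [hc]
    rw [h1, ← Set.pi_univ Set.univ, volume_pi_pi]
    simp
  | succ m ih =>
    intro c hc
    have hmp : MeasurePreserving (MeasurableEquiv.piFinSuccAbove (fun _ : Fin (m+1) => ℝ) 0) :=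
      volume_preserving_piFinSuccAbove (fun _ => ℝ) 0
    set T : Set (ℝ × (Fin m → ℝ)) :=
      {p | 0 ≤ p.1 ∧ ((∀ i, 0 ≤ p.2 i) ∧ p.1 + ∑ i, p.2 i ≤ c)} with hT
    have hTm : MeasurableSet T := by
      have : T = {p : ℝ × (Fin m → ℝ) | 0 ≤ p.1} ∩
          ((⋂ i, {p : ℝ × (Fin m → ℝ) | 0 ≤ p.2 i}) ∩
            {p : ℝ × (Fin m → ℝ) | p.1 + ∑ i, p.2 i ≤ c}) := by
        ext p; simp [hT, Set.mem_iInter]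
      rw [this]
      refine (measurableSet_le measurable_const measurable_fst).inter
        ((MeasurableSet.iInter fun i => measurableSet_le measurable_const
          ((measurable_pi_apply i).comp measurable_snd : Measurable fun p : ℝ × (Fin m → ℝ) => p.2 i)).inter
          (measurableSet_le (measurable_fst.add ?_ : Measurable fun p : ℝ × (Fin m → ℝ) => p.1 + ∑ i, p.2 i) measurable_const))
      exact Finset.measurable_sum _ fun i _ => (measurable_pi_apply i).comp measurable_snd
    have hpre : {u : Fin (m+1) → ℝ | (∀ i, 0 ≤ u i) ∧ ∑ i, u i ≤ c}
        = (MeasurableEquiv.piFinSuccAbove (fun _ : Fin (m+1) => ℝ) 0) ⁻¹' T := by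
      ext u
      simp only [Set.mem_setOf_eq, Set.mem_preimage, MeasurableEquiv.piFinSuccAbove,
        MeasurableEquiv.coe_mk, hT]
      constructor
      · rintro ⟨h1, h2⟩
        refine ⟨h1 0, fun i => h1 _, ?_⟩
        rw [Fin.sum_univ_succ] at h2
        simpa [Fin.succAbove, Fin.tail] using h2
      · rintro ⟨h1, h2, h3⟩
        constructor
        · intro i
          rcases Fin.eq_zero_or_eq_succ i with rfl | ⟨j, rfl⟩
          · exact h1
          · simpa [Fin.succAbove, Fin.tail] using h2 j
        · rw [Fin.sum_univ_succ]
          simpa [Fin.succAbove, Fin.tail] using h3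
    rw [hpre, hmp.measure_preimage hTm.nullMeasurableSet]
    
    rw [Measure.volume_eq_prod, Measure.prod_apply hTm]
    have hslice : (fun a => volume (Prod.mk a ⁻¹' T))
        = Set.indicator (Set.Icc 0 c) (fun a => ENNReal.ofReal ((c - a) ^ m / m.factorial)) := by
      funext a
      by_cases ha : a ∈ Set.Icc 0 c
      · rw [Set.indicator_of_mem ha]
        have : Prod.mk a ⁻¹' T = {u : Fin m → ℝ | (∀ i, 0 ≤ u i) ∧ ∑ i, u i ≤ c - a} := by
          ext u
          simp only [hT, Set.mem_preimage, Set.mem_setOf_eq]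
          constructor
          · rintro ⟨-, h2, h3⟩; exact ⟨h2, by linarith⟩
          · rintro ⟨h2, h3⟩; exact ⟨ha.1, h2, by linarith⟩
        rw [this, ih _ (by linarith [ha.2])]
      · rw [Set.indicator_of_notMem ha]
        have : Prod.mk a ⁻¹' T = ∅ := by
          ext u
          simp only [hT, Set.mem_preimage, Set.mem_setOf_eq, Set.mem_empty_iff_false, iff_false]
          rintro ⟨h1, h2, h3⟩
          apply ha
          have hsum : 0 ≤ ∑ i, u i := Finset.sum_nonneg fun i _ => h2 i
          exact ⟨h1, by linarith⟩
        rw [this]; simp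
    rw [hslice]
    rw [show ((Set.Icc (0:ℝ) c).indicator fun a => ENNReal.ofReal ((c - a) ^ m / m.factorial)) = fun a => (Set.Icc (0:ℝ) c).indicator (fun a => ENNReal.ofReal ((c - a) ^ m / m.factorial)) a from rfl]
    rw [lintegral_indicator measurableSet_Icc]
    have hcont : Continuous fun a : ℝ => (c - a) ^ m / m.factorial :=
      ((continuous_const.sub continuous_id).pow m).div_const _
    have hint : IntegrableOn (fun a : ℝ => (c - a) ^ m / m.factorial) (Set.Icc 0 c) :=
      hcont.integrableOn_Icc
    have hnn : 0 ≤ᵐ[volume.restrict (Set.Icc 0 c)] fun a : ℝ => (c - a) ^ m / m.factorial := by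
      filter_upwards [ae_restrict_mem measurableSet_Icc] with a ha
      have : (0:ℝ) ≤ (c - a) ^ m := pow_nonneg (by linarith [ha.2]) m
      positivity
    rw [← ofReal_integral_eq_lintegral_ofReal hint hnn]
    congr 1
    rw [MeasureTheory.integral_Icc_eq_integral_Ioc, ← intervalIntegral.integral_of_le hc]
    have := intervalIntegral.integral_comp_sub_left (a := 0) (b := c) (fun t : ℝ => t ^ m / m.factorial) c
    rw [this]
    simp only [sub_self, sub_zero]
    rw [intervalIntegral.integral_div, integral_pow]
    have h1 : ((m:ℝ) + 1) ≠ 0 := by positivity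
    have h2 : (m.factorial : ℝ) ≠ 0 := Nat.cast_ne_zero.mpr m.factorial_ne_zero
    rw [Nat.factorial_succ]
    push_cast
    field_simp
    simp

def ev (m : ℕ) (j : Fin m) : Fin (2*m) := ⟨2*j, by omega⟩
def od (m : ℕ) (j : Fin m) : Fin (2*m) := ⟨2*j+1, by omega⟩

def interleave (m : ℕ) : Fin m ⊕ Fin m ≃ Fin (2*m) where
  toFun := Sum.elim (ev m) (od m)
  invFun i := if h : (i:ℕ) % 2 = 0 then Sum.inl ⟨(i:ℕ)/2, by omega⟩ else Sum.inr ⟨(i:ℕ)/2, by omega⟩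
  left_inv s := by
    rcases s with j | j
    · show (if h : ((ev m j : Fin (2*m)) :ℕ) % 2 = 0 then _ else _) = _
      rw [dif_pos (by simp [ev]; try omega)]
      congr 1
      ext
      simp [ev]
      try omega
      try omega
    · show (if h : ((od m j : Fin (2*m)) :ℕ) % 2 = 0 then _ else _) = _
      rw [dif_neg (by simp [od]; try omega)]
      congr 1
      ext
      simp [od]
      try omega
  right_inv i := by
    show Sum.elim (ev m) (od m) (if h : (i:ℕ) % 2 = 0 then _ else _) = i
    by_cases h : (i:ℕ) % 2 = 0
    · rw [dif_pos h, Sum.elim_inl]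
      ext
      simp [ev]
      try omega
      try omega
    · rw [dif_neg h, Sum.elim_inr]
      ext
      simp [od]
      try omega

lemma interleave_inl (m : ℕ) (j : Fin m) : interleave m (Sum.inl j) = ev m j := rfl
lemma interleave_inr (m : ℕ) (j : Fin m) : interleave m (Sum.inr j) = od m j := rfl

lemma sum_interleave (m : ℕ) (f : Fin (2*m) → ℝ) :
    ∑ i, f i = ∑ j, f (ev m j) + ∑ j, f (od m j) := by
  rw [← Equiv.sum_comp (interleave m) f, Fintype.sum_sum_type]
  rfl

/-- the "gap" linear map -/
noncomputable def gapMap (n : ℕ) : (Fin n → ℝ) →ₗ[ℝ] (Fin n → ℝ) :=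
  LinearMap.pi fun i => LinearMap.proj i -
    (if h : (i:ℕ)+1 < n then LinearMap.proj (⟨(i:ℕ)+1, h⟩ : Fin n) else 0)

lemma gapMap_apply (n : ℕ) (y : Fin n → ℝ) (i : Fin n) :
    gapMap n y i = y i - (if h : (i:ℕ)+1 < n then y ⟨(i:ℕ)+1, h⟩ else 0) := by
  by_cases h : (i:ℕ)+1 < n <;> simp [gapMap, h]

lemma gapMap_entry (n : ℕ) (i j : Fin n) :
    LinearMap.toMatrix (Pi.basisFun ℝ (Fin n)) (Pi.basisFun ℝ (Fin n)) (gapMap n) i j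
      = (if j = i then (1:ℝ) else 0) - (if (j:ℕ) = (i:ℕ)+1 then 1 else 0) := by
  rw [LinearMap.toMatrix_apply]
  simp only [Pi.basisFun_apply, Pi.basisFun_repr, gapMap_apply]
  congr 1
  · simp [Pi.single_apply, eq_comm]
  · by_cases h : (i:ℕ)+1 < n
    · rw [dif_pos h]
      simp [Pi.single_apply, Fin.ext_iff, eq_comm]
    · rw [dif_neg h, if_neg (fun hc => h (by omega))]

lemma gapMap_det (n : ℕ) : LinearMap.det (gapMap n) = 1 := by
  rw [← LinearMap.det_toMatrix (Pi.basisFun ℝ (Fin n))]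
  rw [Matrix.det_of_upperTriangular]
  · apply Finset.prod_eq_one
    intro i _
    rw [gapMap_entry, if_pos rfl, if_neg (by omega)]
    norm_num
  · intro i j hij
    have hij' : (j:ℕ) < (i:ℕ) := hij
    rw [gapMap_entry, if_neg (by rw [Fin.ext_iff]; omega), if_neg (by omega)]
    norm_num

noncomputable def addMap (m : ℕ) : (Fin (2*m) → ℝ) →ₗ[ℝ] (Fin (2*m) → ℝ) :=
  LinearMap.pi fun i => LinearMap.proj i +
    (if (i:ℕ) = 2*m-1 then ∑ j : Fin m, LinearMap.proj (ev m j) else 0)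

lemma addMap_apply (m : ℕ) (z : Fin (2*m) → ℝ) (i : Fin (2*m)) :
    addMap m z i = z i + (if (i:ℕ) = 2*m-1 then ∑ j : Fin m, z (ev m j) else 0) := by
  by_cases h : (i:ℕ) = 2*m-1 <;> simp [addMap, h]

lemma addMap_entry (m : ℕ) (i j : Fin (2*m)) :
    LinearMap.toMatrix (Pi.basisFun ℝ (Fin (2*m))) (Pi.basisFun ℝ (Fin (2*m))) (addMap m) i j
      = (if j = i then (1:ℝ) else 0)
        + (if (i:ℕ) = 2*m-1 ∧ (j:ℕ) % 2 = 0 then 1 else 0) := by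
  rw [LinearMap.toMatrix_apply]
  simp only [Pi.basisFun_apply, Pi.basisFun_repr, addMap_apply]
  congr 1
  · simp [Pi.single_apply, eq_comm]
  · by_cases h : (i:ℕ) = 2*m-1
    · rw [if_pos h]
      by_cases hj : (j:ℕ) % 2 = 0
      · rw [if_pos ⟨h, hj⟩]
        have key : ∀ k : Fin m, (Pi.single j (1:ℝ) : Fin (2*m) → ℝ) (ev m k) = if k = ⟨(j:ℕ)/2, by omega⟩ then 1 else 0 := by
          intro k
          rw [Pi.single_apply]
          congr 1
          simp [ev, Fin.ext_iff]
          omega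
        simp only [key]
        rw [Finset.sum_ite_eq' Finset.univ]
        simp
      · rw [if_neg (by tauto)]
        apply Finset.sum_eq_zero
        intro k _
        rw [Pi.single_apply, if_neg]
        simp [ev, Fin.ext_iff]
        omega
    · rw [if_neg h, if_neg (by tauto)]

lemma addMap_det (m : ℕ) : LinearMap.det (addMap m) = 1 := by
  rw [← LinearMap.det_toMatrix (Pi.basisFun ℝ (Fin (2*m)))]
  rw [Matrix.det_of_lowerTriangular]
  · apply Finset.prod_eq_one
    intro i _
    rw [addMap_entry, if_pos rfl, if_neg (by omega)]
    norm_num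
  · intro i j hij
    have hij' : (i:ℕ) < (j:ℕ) := hij
    rw [addMap_entry, if_neg (by rw [Fin.ext_iff]; omega), if_neg (by omega)]
    norm_num

def Hset (m : ℕ) (l : ℝ) : Set (Fin (2*m) → ℝ) :=
  {z | ((∀ j, 0 ≤ z (ev m j)) ∧ ∑ j, z (ev m j) ≤ l) ∧
       ((∀ j, 0 ≤ z (od m j)) ∧ ∑ j, z (od m j) ≤ 1 - l)}

lemma Hset_measurable (m : ℕ) (l : ℝ) : MeasurableSet (Hset m l) := by
  have : Hset m l =
      ((⋂ j, {z : Fin (2*m) → ℝ | 0 ≤ z (ev m j)}) ∩ {z | ∑ j, z (ev m j) ≤ l}) ∩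
      ((⋂ j, {z : Fin (2*m) → ℝ | 0 ≤ z (od m j)}) ∩ {z | ∑ j, z (od m j) ≤ 1 - l}) := by
    ext z; simp [Hset, Set.mem_iInter]
  rw [this]
  exact (((MeasurableSet.iInter fun j => measurableSet_le measurable_const (measurable_pi_apply _)).inter
      (measurableSet_le (Finset.measurable_sum (f := fun j (z : Fin (2*m) → ℝ) => z (ev m j)) Finset.univ fun i _ => measurable_pi_apply _) measurable_const))).inter
    (((MeasurableSet.iInter fun j => measurableSet_le measurable_const (measurable_pi_apply _)).inter
      (measurableSet_le (Finset.measurable_sum (f := fun j (z : Fin (2*m) → ℝ) => z (od m j)) Finset.univ fun i _ => measurable_pi_apply _) measurable_const)))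

lemma Hset_volume (m : ℕ) (l : ℝ) (h0 : 0 ≤ l) (h1 : l ≤ 1) :
    volume (Hset m l) = ENNReal.ofReal (l ^ m / m.factorial) *
      ENNReal.ofReal ((1-l) ^ m / m.factorial) := by
  have hP : MeasurePreserving (MeasurableEquiv.piCongrLeft (fun _ : Fin (2*m) => ℝ) (interleave m)) :=
    volume_measurePreserving_piCongrLeft _ _
  rw [← hP.measure_preimage (Hset_measurable m l).nullMeasurableSet]
  have hpre : (MeasurableEquiv.piCongrLeft (fun _ : Fin (2*m) => ℝ) (interleave m)) ⁻¹' (Hset m l)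
      = (MeasurableEquiv.sumPiEquivProdPi (fun _ : Fin m ⊕ Fin m => ℝ)) ⁻¹'
        (({u : Fin m → ℝ | (∀ i, 0 ≤ u i) ∧ ∑ i, u i ≤ l}) ×ˢ
         ({v : Fin m → ℝ | (∀ i, 0 ≤ v i) ∧ ∑ i, v i ≤ 1 - l})) := by
    ext g
    have hev : ∀ j, (MeasurableEquiv.piCongrLeft (fun _ : Fin (2*m) => ℝ) (interleave m)) g (ev m j)
        = g (Sum.inl j) := by
      intro j
      rw [← interleave_inl m j]
      exact Equiv.piCongrLeft_apply_apply _ _ _ _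
    have hod : ∀ j, (MeasurableEquiv.piCongrLeft (fun _ : Fin (2*m) => ℝ) (interleave m)) g (od m j)
        = g (Sum.inr j) := by
      intro j
      rw [← interleave_inr m j]
      exact Equiv.piCongrLeft_apply_apply _ _ _ _
    simp only [Set.mem_preimage, Hset, Set.mem_setOf_eq, hev, hod, Set.mem_prod,
      MeasurableEquiv.sumPiEquivProdPi]
    rfl
  rw [hpre]
  have hQ : MeasurePreserving (MeasurableEquiv.sumPiEquivProdPi (fun _ : Fin m ⊕ Fin m => ℝ)) :=
    volume_measurePreserving_sumPiEquivProdPi _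
  rw [hQ.measure_preimage (((simplex_measurable m l).prod (simplex_measurable m (1-l))).nullMeasurableSet)]
  rw [Measure.volume_eq_prod, Measure.prod_prod, simplex_volume m l h0, simplex_volume m (1-l) (by linarith)]

lemma antitone_of_adj {n : ℕ} (y : Fin n → ℝ)
    (h : ∀ (i : ℕ) (h1 : i + 1 < n), y ⟨i+1, h1⟩ ≤ y ⟨i, by omega⟩) : Antitone y := by
  have key : ∀ (a k : ℕ) (hk : a + k < n), y ⟨a + k, hk⟩ ≤ y ⟨a, by omega⟩ := by
    intro a k
    induction k with
    | zero => intro hk; exact le_refl _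
    | succ k ih =>
      intro hk
      calc y ⟨a + (k+1), hk⟩ = y ⟨(a+k)+1, by omega⟩ := by congr 1
        _ ≤ y ⟨a+k, by omega⟩ := h _ _
        _ ≤ y ⟨a, _⟩ := ih (by omega)
  intro a b hab
  obtain ⟨k, hk⟩ := Nat.le.dest (Fin.le_def.mp hab)
  have : b = ⟨(a:ℕ) + k, by omega⟩ := by rw [Fin.ext_iff]; simp [← hk]
  rw [this]
  have := key (a:ℕ) k (by omega)
  convert this using 2

lemma mem_Dset_iff (m : ℕ) (hm : 0 < m) (l : ℝ)
    (y : Fin (2*m) → ℝ) :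
    y ∈ Dset (2*m+1) l ↔
      (Antitone y ∧ y ⟨0, by omega⟩ ≤ 1 ∧
        0 ≤ l - ∑ j : Fin (2*m), (-1:ℝ)^(j:ℕ) * y j ∧
        l - ∑ j : Fin (2*m), (-1:ℝ)^(j:ℕ) * y j ≤ y ⟨2*m-1, by omega⟩) := by
  have hpow : ((-1:ℝ))^(2*m) = 1 := by
    rw [pow_mul]; norm_num
  constructor
  · rintro ⟨x, hx, hb, hsum, hy⟩
    have hyx : ∀ i : Fin (2*m), y i = x (Fin.castSucc i) := by
      intro i
      rw [hy i]
      congr 1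
    have hanti : Antitone y := by
      intro a b hab
      rw [hyx a, hyx b]
      exact hx (by rw [Fin.le_def] at hab ⊢; exact hab)
    have hsum' : ∑ j : Fin (2*m), (-1:ℝ)^(j:ℕ) * y j + x (Fin.last (2*m)) = l := by
      rw [← hsum, Fin.sum_univ_castSucc]
      congr 1
      · apply Finset.sum_congr rfl
        intro j _
        rw [hyx j]
        rfl
      · rw [Fin.val_last, hpow, one_mul]
    have ht : l - ∑ j : Fin (2*m), (-1:ℝ)^(j:ℕ) * y j = x (Fin.last (2*m)) := by
      linarith
    refine ⟨hanti, ?_, ?_, ?_⟩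
    · rw [hyx ⟨0, by omega⟩]
      exact (hb _).2
    · rw [ht]; exact (hb _).1
    · rw [ht, hyx ⟨2*m-1, by omega⟩]
      apply hx
      rw [Fin.le_def]
      simp [Fin.last]
      try omega
  · rintro ⟨hanti, h0, ht0, ht1⟩
    set t := l - ∑ j : Fin (2*m), (-1:ℝ)^(j:ℕ) * y j with htdef
    refine ⟨Fin.snoc y t, ?_, ?_, ?_, ?_⟩
    · rw [Fin.antitone_iff_succ_le]
      intro i
      rw [Fin.snoc_castSucc]
      by_cases hi' : (i:ℕ) + 1 < 2*m
      · have : i.succ = Fin.castSucc ⟨(i:ℕ)+1, hi'⟩ := by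
          rw [Fin.ext_iff]; simp
        rw [this, Fin.snoc_castSucc]
        exact hanti (by rw [Fin.le_def]; simp)
      · have : i.succ = Fin.last (2*m) := by
          rw [Fin.ext_iff]; simp [Fin.last]; omega
        rw [this, Fin.snoc_last]
        have : i = ⟨2*m-1, by omega⟩ := by rw [Fin.ext_iff]; simp; omega
        rw [this]
        exact ht1
    · intro j
      rcases Fin.lt_or_eq_of_le (Fin.le_last j) with hj | hj
      · have hj' : (j:ℕ) < 2*m := by rw [Fin.lt_def] at hj; simpa [Fin.last] using hj
        have : j = Fin.castSucc ⟨(j:ℕ), hj'⟩ := by rw [Fin.ext_iff]; simp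
        rw [this, Fin.snoc_castSucc]
        constructor
        · calc (0:ℝ) ≤ t := ht0
            _ ≤ y ⟨2*m-1, by omega⟩ := ht1
            _ ≤ y ⟨(j:ℕ), hj'⟩ := hanti (by rw [Fin.le_def]; simp; omega)
        · calc y ⟨(j:ℕ), hj'⟩ ≤ y ⟨0, by omega⟩ := hanti (by rw [Fin.le_def]; simp)
            _ ≤ 1 := h0
      · rw [hj, Fin.snoc_last]
        refine ⟨ht0, ?_⟩
        calc t ≤ y ⟨2*m-1, by omega⟩ := ht1
          _ ≤ y ⟨0, by omega⟩ := hanti (by rw [Fin.le_def]; simp)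
          _ ≤ 1 := h0
    · rw [Fin.sum_univ_castSucc]
      simp only [Fin.snoc_castSucc, Fin.snoc_last, Fin.val_last, hpow, one_mul,
        Fin.coe_castSucc]
      ring
    · intro i
      have : Fin.castLE (Nat.sub_le (2*m+1) 1) i = Fin.castSucc i := by
        rw [Fin.ext_iff]; rfl
      rw [this, Fin.snoc_castSucc]

set_option maxHeartbeats 1000000
lemma ev_val (m : ℕ) (j : Fin m) : ((ev m j : Fin (2*m)) : ℕ) = 2*(j:ℕ) := rfl
lemma od_val (m : ℕ) (j : Fin m) : ((od m j : Fin (2*m)) : ℕ) = 2*(j:ℕ)+1 := rfl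

def cvec (m : ℕ) (l : ℝ) : Fin (2*m) → ℝ := fun i => if (i:ℕ) = 2*m-1 then -l else 0

lemma altsum (m : ℕ) (y : Fin (2*m) → ℝ) :
    ∑ j : Fin (2*m), (-1:ℝ)^(j:ℕ) * y j = ∑ j, (y (ev m j) - y (od m j)) := by
  rw [sum_interleave m (fun i => (-1:ℝ)^(i:ℕ) * y i)]
  have h1 : ∀ j : Fin m, (-1:ℝ)^((ev m j : Fin (2*m)):ℕ) * y (ev m j) = y (ev m j) := by
    intro j
    rw [ev_val, pow_mul]
    norm_num
  have h2 : ∀ j : Fin m, (-1:ℝ)^((od m j : Fin (2*m)):ℕ) * y (od m j) = -(y (od m j)) := by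
    intro j
    rw [od_val, pow_succ, pow_mul]
    norm_num
  calc (∑ j, (-1:ℝ)^((ev m j : Fin (2*m)):ℕ) * y (ev m j))
        + (∑ j, (-1:ℝ)^((od m j : Fin (2*m)):ℕ) * y (od m j))
      = (∑ j, y (ev m j)) + (∑ j, -(y (od m j))) := by
        rw [Finset.sum_congr rfl fun j _ => h1 j, Finset.sum_congr rfl fun j _ => h2 j]
    _ = ∑ j, (y (ev m j) - y (od m j)) := by
        rw [Finset.sum_neg_distrib, Finset.sum_sub_distrib]
        ring

lemma sum_gapMap (n : ℕ) (hn : 0 < n) (y : Fin n → ℝ) :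
    ∑ i, gapMap n y i = y ⟨0, hn⟩ := by
  obtain ⟨k, rfl⟩ := Nat.exists_eq_succ_of_ne_zero (Nat.pos_iff_ne_zero.mp hn)
  simp only [gapMap_apply]
  rw [Finset.sum_sub_distrib]
  have h2 : ∑ i : Fin (k+1), (if h : (i:ℕ)+1 < k+1 then y ⟨(i:ℕ)+1, h⟩ else 0)
      = ∑ i : Fin k, y i.succ := by
    rw [Fin.sum_univ_castSucc]
    rw [dif_neg (by simp)]
    rw [add_zero]
    apply Finset.sum_congr rfl
    intro i _
    rw [dif_pos (by simp only [Fin.coe_castSucc]; omega)]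
    first
      | rfl
      | (congr 1; rw [Fin.ext_iff]; simp)
  rw [h2, Fin.sum_univ_succ]
  have : (0 : Fin (k+1)) = ⟨0, hn⟩ := rfl
  rw [this]
  ring

lemma Dset_eq (m : ℕ) (hm : 0 < m) (l : ℝ) :
    Dset (2*m+1) l =
      gapMap (2*m) ⁻¹' (addMap m ⁻¹' ((fun z => z + cvec m l) ⁻¹' Hset m l)) := by
  ext y
  rw [mem_Dset_iff m hm l y]
  set w : Fin (2*m) → ℝ := addMap m (gapMap (2*m) y) + cvec m l with hw
  have hmem : (y ∈ gapMap (2*m) ⁻¹' (addMap m ⁻¹' ((fun z => z + cvec m l) ⁻¹' Hset m l)))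
      ↔ w ∈ Hset m l := Iff.rfl
  rw [hmem]
  -- key pointwise formulas
  have hgap_ev : ∀ j : Fin m, gapMap (2*m) y (ev m j) = y (ev m j) - y (od m j) := by
    intro j
    rw [gapMap_apply]
    rw [dif_pos (by simp only [ev_val, Fin.val_mk]; omega)]
    congr 2
  have hS : ∑ k, gapMap (2*m) y (ev m k) = ∑ k, (y (ev m k) - y (od m k)) :=
    Finset.sum_congr rfl fun k _ => hgap_ev k
  have hev : ∀ j : Fin m, w (ev m j) = y (ev m j) - y (od m j) := by
    intro j
    rw [hw]
    simp only [Pi.add_apply, addMap_apply, cvec]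
    rw [if_neg (by simp only [ev_val, Fin.val_mk]; omega), if_neg (by simp only [ev_val, Fin.val_mk]; omega)]
    rw [hgap_ev j]
    ring
  have hod_lt : ∀ (j : Fin m) (hj : (j:ℕ) < m - 1),
      w (od m j) = y (od m j) - y ⟨2*(j:ℕ)+2, by omega⟩ := by
    intro j hj
    rw [hw]
    simp only [Pi.add_apply, addMap_apply, cvec]
    rw [if_neg (by simp only [od_val, Fin.val_mk]; omega), if_neg (by simp only [od_val, Fin.val_mk]; omega)]
    rw [gapMap_apply, dif_pos (by simp only [od_val, Fin.val_mk]; omega)]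
    have : (⟨((od m j : Fin (2*m)):ℕ)+1, by simp only [od_val, Fin.val_mk]; omega⟩ : Fin (2*m)) = ⟨2*(j:ℕ)+2, by omega⟩ := by
      rw [Fin.ext_iff]; simp only [od_val, Fin.val_mk]
    rw [this]
    ring
  have hlastj : (od m ⟨m-1, by omega⟩ : Fin (2*m)) = ⟨2*m-1, by omega⟩ := by
    rw [Fin.ext_iff]; simp only [od_val, Fin.val_mk]; omega
  have hod_last : w (od m ⟨m-1, by omega⟩)
      = y ⟨2*m-1, by omega⟩ + ∑ k, (y (ev m k) - y (od m k)) - l := by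
    rw [hw]
    simp only [Pi.add_apply, addMap_apply, cvec, hlastj]
    rw [if_pos (by simp only [Fin.val_mk]), if_pos (by simp only [Fin.val_mk])]
    rw [gapMap_apply, dif_neg (by simp only [Fin.val_mk]; omega), hS]
    ring
  have hsum_od : ∑ j, w (od m j) = y ⟨0, by omega⟩ - l := by
    have h1 : ∀ j : Fin m, w (od m j) = gapMap (2*m) y (od m j)
        + (if j = (⟨m-1, by omega⟩ : Fin m) then (∑ k, gapMap (2*m) y (ev m k)) - l else 0) := by
      intro j
      rw [hw]
      simp only [Pi.add_apply, addMap_apply, cvec]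
      by_cases hj : (j:ℕ) = m-1
      · have : j = (⟨m-1, by omega⟩ : Fin m) := by rw [Fin.ext_iff]; exact hj
        rw [if_pos this, if_pos (by simp only [od_val, Fin.val_mk]; omega), if_pos (by simp only [od_val, Fin.val_mk]; omega)]
        ring
      · have : ¬ (j = (⟨m-1, by omega⟩ : Fin m)) := by rw [Fin.ext_iff]; simpa using hj
        rw [if_neg this, if_neg (by simp only [od_val, Fin.val_mk]; omega), if_neg (by simp only [od_val, Fin.val_mk]; omega)]
        ring
    rw [Finset.sum_congr rfl fun j _ => h1 j, Finset.sum_add_distrib,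
      Finset.sum_ite_eq' Finset.univ]
    rw [if_pos (Finset.mem_univ _)]
    have htot : ∑ j, gapMap (2*m) y (od m j) + ∑ k, gapMap (2*m) y (ev m k)
        = y ⟨0, by omega⟩ := by
      rw [← sum_gapMap (2*m) (by omega) y, sum_interleave m (gapMap (2*m) y)]
      ring
    linarith [htot]
  have hsum_ev : ∑ j, w (ev m j) = ∑ j, (y (ev m j) - y (od m j)) :=
    Finset.sum_congr rfl fun j _ => hev j
  -- now the iff
  simp only [Hset, Set.mem_setOf_eq]
  rw [hsum_ev, hsum_od, ← altsum m y]
  constructor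
  · rintro ⟨hanti, h0, ht0, ht1⟩
    refine ⟨⟨?_, by linarith⟩, ⟨?_, by linarith⟩⟩
    · intro j
      rw [hev j]
      have := hanti (a := ev m j) (b := od m j) (by rw [Fin.le_def]; simp only [ev_val, od_val]; omega)
      linarith
    · intro j
      by_cases hj : (j:ℕ) < m - 1
      · rw [hod_lt j hj]
        have := hanti (a := od m j) (b := ⟨2*(j:ℕ)+2, by omega⟩) (by rw [Fin.le_def]; simp only [od_val, Fin.val_mk]; omega)
        linarith
      · have : j = (⟨m-1, by omega⟩ : Fin m) := by rw [Fin.ext_iff]; simp only [Fin.val_mk]; omega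
        rw [this, hod_last, ← altsum m y]
        linarith
  · rintro ⟨⟨hev0, hevs⟩, ⟨hod0, hods⟩⟩
    have hanti : Antitone y := by
      apply antitone_of_adj
      intro i h1
      rcases Nat.even_or_odd i with ⟨j, hj⟩ | ⟨j, hj⟩
      · have hjm : j < m := by omega
        have h := hev0 ⟨j, hjm⟩
        rw [hev ⟨j, hjm⟩] at h
        have he : (⟨i, by omega⟩ : Fin (2*m)) = ev m ⟨j, hjm⟩ := by
          rw [Fin.ext_iff]; simp only [ev_val, Fin.val_mk]; omega
        have ho : (⟨i+1, h1⟩ : Fin (2*m)) = od m ⟨j, hjm⟩ := by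
          rw [Fin.ext_iff]; simp only [od_val, Fin.val_mk]; omega
        rw [he, ho]
        linarith
      · have hjm : (j:ℕ) < m - 1 := by omega
        have h := hod0 ⟨j, by omega⟩
        rw [hod_lt ⟨j, by omega⟩ hjm] at h
        have ho : (⟨i, by omega⟩ : Fin (2*m)) = od m ⟨j, by omega⟩ := by
          rw [Fin.ext_iff]; simp only [od_val, Fin.val_mk]; omega
        have he : (⟨i+1, h1⟩ : Fin (2*m)) = (⟨2*j+2, by omega⟩ : Fin (2*m)) := by
          rw [Fin.ext_iff]; simp only [Fin.val_mk]; omega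
        rw [ho, he]
        linarith
    refine ⟨hanti, by linarith, by linarith, ?_⟩
    have h := hod0 ⟨m-1, by omega⟩
    rw [hod_last, ← altsum m y] at h
    linarith

theorem stmt_6 (m : ℕ) (l : ℝ) (hl : l ∈ Set.Icc (0:ℝ) 1) :
    volume (Dset (2 * m + 1) l) =
      ENNReal.ofReal
        ((1 / ((2 * m + 1).factorial : ℝ)) *
          (((2 * m + 1).factorial : ℝ) / (m.factorial * m.factorial)) *
          l ^ m * (1 - l) ^ m) := by
  rcases Nat.eq_zero_or_pos m with rfl | hm
  · have hD : Dset (2*0+1) l = Set.univ := by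
      ext y
      simp only [Dset, Set.mem_setOf_eq, Set.mem_univ, iff_true]
      refine ⟨fun _ => l, antitone_const, fun j => ⟨hl.1, hl.2⟩, ?_, fun i => Fin.elim0 i⟩
      simp
    rw [hD, ← Set.pi_univ Set.univ, volume_pi_pi]
    simp [Nat.factorial]
  · rw [Dset_eq m hm l]
    show volume ((gapMap (2*m)) ⁻¹' ((addMap m) ⁻¹' ((fun z => z + cvec m l) ⁻¹' Hset m l)))
      = _
    rw [Measure.addHaar_preimage_linearMap (f := gapMap (2*m)) volume (by rw [gapMap_det]; norm_num),
      Measure.addHaar_preimage_linearMap (f := addMap m) volume (by rw [addMap_det]; norm_num),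
      gapMap_det, addMap_det]
    have htrans : volume ((fun z => z + cvec m l) ⁻¹' Hset m l) = volume (Hset m l) :=
      measure_preimage_add_right volume (cvec m l) (Hset m l)
    rw [htrans, Hset_volume m l hl.1 hl.2]
    simp only [inv_one, abs_one, ENNReal.ofReal_one, one_mul]
    rw [← ENNReal.ofReal_mul (div_nonneg (pow_nonneg hl.1 m) (by positivity))]
    congr 1
    have h1 : ((2*m+1).factorial : ℝ) ≠ 0 := Nat.cast_ne_zero.mpr (Nat.factorial_ne_zero _)
    have h2 : (m.factorial : ℝ) ≠ 0 := Nat.cast_ne_zero.mpr (Nat.factorial_ne_zero _)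
    field_simp
    try ring
end

section
/- For N ≥ 1, u ∈ ℝ, and n ∈ {0,...,N-1}, the ordered product Π_{k=N-1}^{0}(I + (u/N)·E_δ(-2k,n)·J) equals I + Σ_{d=1}^{N} (u/N)^d · Σ_{l=0}^{N-1} AQ_N(l,d)·E_δ(-2l,n)·J^d, where AQ_N(l,d) counts strictly decreasing d-tuples in {0,...,N-1} with alternating sum l. -/
open Complex Matrix

/-- `Ediscr N x n = diag(e^{iπxn/N}, e^{-iπxn/N})`. -/
noncomputable def Ediscr (N : ℕ) (x : ℝ) (n : ℕ) : Matrix (Fin 2) (Fin 2) ℂ :=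
  !![Complex.exp (Real.pi * Complex.I * x * n / N), 0;
     0, Complex.exp (-(Real.pi * Complex.I * x * n / N))]

def Jmat : Matrix (Fin 2) (Fin 2) ℂ := !![0, 1; -1, 0]

/-- `AQ N l d` is the number of strictly decreasing `d`-tuples in `{0, …, N-1}`
with alternating sum `l`. -/
noncomputable def AQ (N : ℕ) (l : ℤ) (d : ℕ) : ℕ :=
  Nat.card {v : Fin d → ℤ // StrictAnti v ∧
    (∀ j, 0 ≤ v j ∧ v j ≤ (N : ℤ) - 1) ∧
    ∑ j : Fin d, (-1 : ℤ) ^ (j : ℕ) * v j = l}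

lemma Ediscr_zero (N n : ℕ) : Ediscr N 0 n = 1 := by
  ext i j
  fin_cases i <;> fin_cases j <;>
    simp [Ediscr, Matrix.one_apply]

lemma Ediscr_mul (N n : ℕ) (x y : ℝ) :
    Ediscr N x n * Ediscr N y n = Ediscr N (x + y) n := by
  ext i j
  fin_cases i <;> fin_cases j <;>
    simp [Ediscr, Matrix.mul_apply, Fin.sum_univ_two, ← Complex.exp_add] <;>
    congr 1 <;> push_cast <;> ring

lemma Jmat_Ediscr (N n : ℕ) (x : ℝ) :
    Jmat * Ediscr N x n = Ediscr N (-x) n * Jmat := by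
  ext i j
  fin_cases i <;> fin_cases j <;>
    simp [Ediscr, Jmat, Matrix.mul_apply, Fin.sum_univ_two] <;> ring_nf


def altSum : List ℕ → ℤ
  | [] => 0
  | a :: t => (a : ℤ) - altSum t

lemma altSum_nonneg_le {L : List ℕ} (h : L.Pairwise (· > ·)) :
    0 ≤ altSum L ∧ altSum L ≤ L.headI := by
  induction L with
  | nil => simp [altSum]
  | cons a t ih =>
      have ht := ih (h.of_cons)
      have hle : altSum t ≤ (a : ℤ) := by
        rcases t with _ | ⟨b, t'⟩
        · simp [altSum]
        · have hba : b < a := (List.pairwise_cons.mp h).1 b (by simp)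
          refine ht.2.trans ?_
          simp only [List.headI]
          exact_mod_cast hba.le
      constructor
      · simp only [altSum]; omega
      · simp only [altSum, List.headI]; omega

lemma prodE (N n : ℕ) (S : List ℕ) :
    (S.map (fun k : ℕ => Ediscr N (-(2 * (k : ℝ))) n * Jmat)).prod =
      Ediscr N (-(2 * ((altSum S : ℤ) : ℝ))) n * Jmat ^ S.length := by
  induction S with
  | nil => simp [altSum, Ediscr_zero]
  | cons a t ih =>
      rw [List.map_cons, List.prod_cons, ih, List.length_cons]
      rw [show altSum (a :: t) = (a : ℤ) - altSum t from rfl]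
      rw [mul_assoc, ← mul_assoc Jmat, Jmat_Ediscr, mul_assoc, ← pow_succ']
      rw [← mul_assoc, Ediscr_mul]
      congr 2
      push_cast
      ring

lemma expand (c : ℂ) (f : ℕ → Matrix (Fin 2) (Fin 2) ℂ) (L : List ℕ) :
    (L.map (fun k => 1 + c • f k)).prod =
      (L.sublists.map (fun S => c ^ S.length • (S.map f).prod)).sum := by
  induction L with
  | nil => simp
  | cons a t ih =>
      rw [List.map_cons, List.prod_cons, ih, List.sublists_cons]
      rw [show ((t.sublists >>= fun x => [x, a :: x]) : List (List ℕ)) = t.sublists.flatMap (fun x => [x, a :: x]) from rfl]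
      rw [List.map_flatMap, List.flatMap_def, List.sum_flatten, List.map_map]
      have hpt : ∀ S : List ℕ,
          (List.sum ∘ fun x => List.map (fun S => c ^ S.length • (List.map f S).prod) [x, a :: x]) S =
            c ^ S.length • (List.map f S).prod
              + c ^ (S.length + 1) • (f a * (List.map f S).prod) := by
        intro S
        simp [List.map_cons, List.prod_cons]
      rw [List.map_congr_left (fun S _ => hpt S), List.sum_map_add]
      rw [add_mul, one_mul, smul_mul_assoc]
      congr 1
      rw [← List.sum_map_mul_left, List.smul_sum, List.map_map]
      refine congrArg _ (List.map_congr_left fun S _ => ?_)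
      simp only [Function.comp]
      rw [mul_smul_comm, smul_smul, ← pow_succ']

lemma altSum_ofFn {d : ℕ} (g : Fin d → ℕ) :
    altSum (List.ofFn g) = ∑ j : Fin d, (-1 : ℤ) ^ (j : ℕ) * (g j : ℤ) := by
  induction d with
  | zero => simp [altSum]
  | succ m ih =>
      rw [List.ofFn_succ, show altSum (g 0 :: List.ofFn fun i => g i.succ) =
        (g 0 : ℤ) - altSum (List.ofFn fun i => g i.succ) from rfl, ih, Fin.sum_univ_succ]
      simp only [Fin.val_zero, pow_zero, one_mul, Fin.val_succ, Function.comp]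
      rw [sub_eq_add_neg, ← Finset.sum_neg_distrib]
      refine congrArg _ (Finset.sum_congr rfl fun x _ => ?_)
      rw [pow_succ]
      ring

lemma sortedL (N : ℕ) : (List.range N).reverse.Pairwise (· > ·) := by
  rw [List.pairwise_reverse]
  exact List.pairwise_lt_range (n := N)

lemma sorted_of_mem_sublists {N : ℕ} {S : List ℕ}
    (h : S ∈ (List.range N).reverse.sublists) : S.Pairwise (· > ·) :=
  List.Pairwise.sublist (List.mem_sublists.mp h) (sortedL N)

lemma lt_of_mem_of_mem_sublists {N : ℕ} {S : List ℕ}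
    (h : S ∈ (List.range N).reverse.sublists) {a : ℕ} (ha : a ∈ S) : a < N := by
  have := (List.mem_sublists.mp h).subset ha
  simpa using this

lemma AQ_card (N d l : ℕ) :
    AQ N (l : ℤ) d =
      (((List.range N).reverse.sublists.toFinset).filter
        (fun S => S.length = d ∧ altSum S = (l : ℤ))).card := by
  rw [AQ, ← Fintype.card_coe, ← Nat.card_eq_fintype_card]
  refine Nat.card_congr ?_
  refine
    { toFun := fun v => ⟨List.ofFn (fun j => (v.1 j).toNat), ?_⟩
      invFun := fun S => ⟨fun j => ((S.1.get (Fin.cast ?hlen j) : ℕ) : ℤ), ?_⟩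
      left_inv := ?_
      right_inv := ?_ }
  case hlen => exact (Finset.mem_filter.mp S.2).2.1.symm
  · -- forward membership
    obtain ⟨v, h1, h2, h3⟩ := v
    simp only [Finset.mem_filter, List.mem_toFinset, List.mem_sublists]
    refine ⟨?_, by simp, ?_⟩
    · -- sublist
      have hpw : (List.ofFn (fun j => (v j).toNat)).Pairwise (· > ·) := by
        rw [List.pairwise_ofFn]
        intro i j hij
        have := h1 hij
        have hi := h2 i; have hj := h2 j
        simp only [gt_iff_lt]
        omega
      refine List.sublist_of_subperm_of_pairwise ?_ (hpw.imp le_of_lt) ((sortedL N).imp le_of_lt)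
      refine List.Nodup.subperm (List.Pairwise.imp (fun h => ne_of_gt h) hpw) ?_
      intro s hs
      rw [List.mem_ofFn] at hs
      obtain ⟨j, rfl⟩ := hs
      have := h2 j
      simp only [List.mem_reverse, List.mem_range]
      omega
    · -- altSum
      rw [altSum_ofFn, ← h3]
      refine Finset.sum_congr rfl fun j _ => ?_
      rw [Int.toNat_of_nonneg (h2 j).1]
  · -- backward membership
    obtain ⟨S, hS⟩ := S
    obtain ⟨hmem, hlen, hsum⟩ := Finset.mem_filter.mp hS
    rw [List.mem_toFinset] at hmem
    have hpw := sorted_of_mem_sublists hmem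
    have hofn : List.ofFn (fun j : Fin d => S.get (Fin.cast hlen.symm j)) = S := by
      refine List.ext_get (by simp [hlen]) fun i hi hi' => ?_
      simp [List.get_ofFn]
    refine ⟨?_, ?_, ?_⟩
    · intro i j hij
      have := List.pairwise_iff_get.mp hpw (Fin.cast hlen.symm i) (Fin.cast hlen.symm j) (by simpa using hij)
      show ((S.get (Fin.cast hlen.symm j) : ℕ) : ℤ) < ((S.get (Fin.cast hlen.symm i) : ℕ) : ℤ)
      exact_mod_cast this
    · intro j
      have hm : S.get (Fin.cast hlen.symm j) ∈ S := List.get_mem S _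
      have := lt_of_mem_of_mem_sublists hmem hm
      show 0 ≤ ((S.get (Fin.cast hlen.symm j) : ℕ) : ℤ) ∧ ((S.get (Fin.cast hlen.symm j) : ℕ) : ℤ) ≤ (N : ℤ) - 1
      omega
    · calc ∑ j : Fin d, (-1 : ℤ) ^ (j : ℕ) * ((S.get (Fin.cast hlen.symm j) : ℕ) : ℤ)
          = altSum (List.ofFn (fun j : Fin d => S.get (Fin.cast hlen.symm j))) := by
            rw [altSum_ofFn]
        _ = (l : ℤ) := by rw [hofn, hsum]
  · -- left inverse
    rintro ⟨v, h1, h2, h3⟩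
    ext j
    simp only [List.get_ofFn]
    rw [Int.toNat_of_nonneg (h2 _).1]
    exact congrArg v (Fin.ext rfl)
  · -- right inverse
    rintro ⟨S, hS⟩
    obtain ⟨hmem, hlen, hsum⟩ := Finset.mem_filter.mp hS
    ext1
    refine List.ext_get (by simp [hlen]) fun i hi hi' => ?_
    simp [List.get_ofFn]

lemma altSum_bounds {N : ℕ} {S : List ℕ}
    (hmem : S ∈ (List.range N).reverse.sublists) (hne : S ≠ []) :
    0 ≤ altSum S ∧ altSum S < N := by
  have hpw : S.Pairwise (· > ·) := sorted_of_mem_sublists hmem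
  have h := altSum_nonneg_le hpw
  refine ⟨h.1, lt_of_le_of_lt h.2 ?_⟩
  rcases S with _ | ⟨a, t⟩
  · exact absurd rfl hne
  · have : a < N := lt_of_mem_of_mem_sublists hmem (by simp)
    simpa [List.headI] using this

lemma fiber_sum (N n : ℕ) (c : ℂ) (d : ℕ) (hd : 1 ≤ d) :
    ∑ S ∈ ((List.range N).reverse.sublists.toFinset).filter (fun S => S.length = d),
        c ^ S.length • (Ediscr N (-(2 * ((altSum S : ℤ) : ℝ))) n * Jmat ^ S.length) =
      c ^ d • ∑ l ∈ Finset.range N,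
        (AQ N (l : ℤ) d : ℂ) • (Ediscr N (-(2 * (l : ℝ))) n * Jmat ^ d) := by
  classical
  have step1 : ∑ S ∈ ((List.range N).reverse.sublists.toFinset).filter (fun S => S.length = d),
      c ^ S.length • (Ediscr N (-(2 * ((altSum S : ℤ) : ℝ))) n * Jmat ^ S.length) =
      c ^ d • ∑ S ∈ ((List.range N).reverse.sublists.toFinset).filter (fun S => S.length = d),
        (Ediscr N (-(2 * ((altSum S : ℤ) : ℝ))) n * Jmat ^ d) := by
    rw [Finset.smul_sum]
    refine Finset.sum_congr rfl fun S hS => ?_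
    have hlen : S.length = d := (Finset.mem_filter.mp hS).2
    rw [hlen]
  rw [step1]
  congr 1
  have hmaps : ∀ S ∈ ((List.range N).reverse.sublists.toFinset).filter (fun S => S.length = d),
      (altSum S).toNat ∈ Finset.range N := by
    intro S hS
    obtain ⟨hS1, hS2⟩ := Finset.mem_filter.mp hS
    rw [List.mem_toFinset] at hS1
    have hne : S ≠ [] := by
      intro h; rw [h] at hS2; simp at hS2; omega
    have := altSum_bounds hS1 hne
    simp only [Finset.mem_range]
    omega
  rw [← Finset.sum_fiberwise_of_maps_to hmaps
    (fun S => Ediscr N (-(2 * ((altSum S : ℤ) : ℝ))) n * Jmat ^ d)]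
  refine Finset.sum_congr rfl fun l hl => ?_
  have hfib : (((List.range N).reverse.sublists.toFinset).filter
        (fun S => S.length = d)).filter (fun S => (altSum S).toNat = l) =
      ((List.range N).reverse.sublists.toFinset).filter
        (fun S => S.length = d ∧ altSum S = (l : ℤ)) := by
    rw [Finset.filter_filter]
    refine Finset.filter_congr fun S hS => ?_
    rw [List.mem_toFinset] at hS
    constructor
    · rintro ⟨h1, h2⟩
      have hne : S ≠ [] := by intro h; rw [h] at h1; simp at h1; omega
      have := (altSum_bounds hS hne).1
      exact ⟨h1, by omega⟩
    · rintro ⟨h1, h2⟩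
      exact ⟨h1, by omega⟩
  rw [hfib]
  have hconst : ∀ S ∈ ((List.range N).reverse.sublists.toFinset).filter
      (fun S => S.length = d ∧ altSum S = (l : ℤ)),
      Ediscr N (-(2 * ((altSum S : ℤ) : ℝ))) n * Jmat ^ d =
        Ediscr N (-(2 * (l : ℝ))) n * Jmat ^ d := by
    intro S hS
    have : altSum S = (l : ℤ) := (Finset.mem_filter.mp hS).2.2
    rw [this]
    norm_num
  rw [Finset.sum_congr rfl hconst, Finset.sum_const, AQ_card N d l,
    ← Nat.cast_smul_eq_nsmul ℂ]

theorem stmt_16 (N : ℕ) (hN : 1 ≤ N) (n : ℕ) (hn : n < N) (u : ℝ) :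
    ((List.range N).reverse.map
        (fun k => (1 : Matrix (Fin 2) (Fin 2) ℂ) +
          ((u / N : ℝ) : ℂ) • (Ediscr N (-(2 * k)) n * Jmat))).prod =
      1 + ∑ d ∈ Finset.Icc 1 N, ((u / N : ℝ) : ℂ) ^ d •
        ∑ l ∈ Finset.range N,
          (AQ N (l : ℤ) d : ℂ) • (Ediscr N (-(2 * l)) n * Jmat ^ d) := by
  classical
  set c : ℂ := ((u / N : ℝ) : ℂ) with hc
  have hnd : ((List.range N).reverse.sublists).Nodup :=
    List.nodup_sublists.mpr (List.nodup_reverse.mpr (List.nodup_range (n := N)))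
  have hco : ∀ M : List ℕ, ((do let a ← M
                                pure ((a : ℕ) : ℝ)) : List ℝ) =
      M.map (fun a : ℕ => (a : ℝ)) := fun M => by
    show M.flatMap (fun a : ℕ => [(a : ℝ)]) = _
    induction M with
    | nil => rfl
    | cons a t ih => simp [List.flatMap_cons, ih]
  rw [hco, List.map_map]
  simp only [Function.comp_def]
  rw [expand c (fun k : ℕ => Ediscr N (-(2 * (k : ℝ))) n * Jmat)]
  simp only [prodE]
  rw [← List.sum_toFinset _ hnd]
  have hmaps : ∀ S ∈ (List.range N).reverse.sublists.toFinset,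
      S.length ∈ Finset.range (N + 1) := by
    intro S hS
    rw [List.mem_toFinset, List.mem_sublists] at hS
    have := hS.length_le
    simp only [List.length_reverse, List.length_range] at this
    simp only [Finset.mem_range]
    omega
  rw [← Finset.sum_fiberwise_of_maps_to hmaps
    (fun S => c ^ S.length • (Ediscr N (-(2 * ((altSum S : ℤ) : ℝ))) n * Jmat ^ S.length))]
  have hins : Finset.range (N + 1) = insert 0 (Finset.Icc 1 N) := by
    ext x; simp [Finset.mem_range, Finset.mem_Icc]; omega
  rw [hins, Finset.sum_insert (by simp)]
  congr 1
  · -- zero fiber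
    have h0 : ((List.range N).reverse.sublists.toFinset).filter
        (fun S => S.length = 0) = {([] : List ℕ)} := by
      ext S
      simp only [Finset.mem_filter, List.mem_toFinset, List.mem_sublists,
        Finset.mem_singleton, List.length_eq_zero_iff]
      constructor
      · rintro ⟨_, h⟩; exact h
      · rintro rfl; exact ⟨List.nil_sublist _, rfl⟩
    rw [h0, Finset.sum_singleton]
    simp [altSum, Ediscr_zero]
  · refine Finset.sum_congr rfl fun d hd => ?_
    exact fiber_sum N n c d (Finset.mem_Icc.mp hd).1
end
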